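/- arXiv:1001.4966 — 5 statements merged into one kernel-verified Lean document; each statement's English description precedes it below -/
import Mathlib

section
/- Let (X,μ) be a non-atomic probability measure space, let φ : X → [0,∞) be measurable and integrable, and let I ⊆ X be measurable with μ(I) > 0. Set s = (1/μ(I)) ∫_I φ dμ. Then for every β ∈ (0, μ(I)] there exists a measurable set E_β ⊆ I with μ(E_β) = β such that (1/μ(E_β)) ∫_{E_β} φ dμ = s. -/
open MeasureTheory Set Filter ENNReal

/-- A measure is non-atomic if every measurable set of positive measure contains a
measurable subset of strictly smaller positive measure. -/
def Nonatomic {X : Type*} [MeasurableSpace X] (μ : Measure X) : Prop :=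
  ∀ A : Set X, MeasurableSet A → 0 < μ A →
    ∃ B, B ⊆ A ∧ MeasurableSet B ∧ 0 < μ B ∧ μ B < μ A

/-- A tree on a probability measure space, in the sense of Melas. -/
structure TreeOn (X : Type*) [MeasurableSpace X] (μ : MeasureTheory.Measure X) where
  carrier : Set (Set X)
  child : Set X → Set (Set X)
  level : ℕ → Set (Set X)
  univ_mem : Set.univ ∈ carrier
  meas : ∀ I ∈ carrier, MeasurableSet I
  pos : ∀ I ∈ carrier, 0 < μ I
  child_subset_carrier : ∀ I ∈ carrier, child I ⊆ carrier
  child_finite : ∀ I ∈ carrier, (child I).Finite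
  child_two : ∀ I ∈ carrier, ∃ J ∈ child I, ∃ K ∈ child I, J ≠ K
  child_sub : ∀ I ∈ carrier, ∀ J ∈ child I, J ⊆ I
  child_almost_disjoint : ∀ I ∈ carrier, ∀ J ∈ child I, ∀ K ∈ child I, J ≠ K → μ (J ∩ K) = 0
  child_union : ∀ I ∈ carrier, ⋃₀ child I = I
  level_zero : level 0 = {Set.univ}
  level_succ : ∀ m, level (m + 1) = ⋃ I ∈ level m, child I
  carrier_eq : carrier = ⋃ m, level m
  level_tendsto : Filter.Tendsto (fun m => ⨆ I ∈ level m, μ I) Filter.atTop (nhds 0)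

/-- The maximal operator associated to a tree `T`:
`M_T φ (x) = sup { (1/μ I) ∫_I |φ| dμ : x ∈ I, I ∈ T }`. -/
noncomputable def maxT {X : Type*} [MeasurableSpace X] (μ : MeasureTheory.Measure X)
    (T : TreeOn X μ) (φ : X → ℝ) (x : X) : ℝ≥0∞ :=
  ⨆ (I : Set X) (_ : I ∈ T.carrier) (_ : x ∈ I),
    (∫⁻ y in I, ENNReal.ofReal |φ y| ∂μ) / μ I

/-- The norm `|||φ|||_{p,∞} = sup { μ(E)^{-1+1/p} ∫_E |φ| dμ : E measurable, μ E > 0 }`. -/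
noncomputable def tripleNorm {X : Type*} [MeasurableSpace X] (μ : MeasureTheory.Measure X)
    (p : ℝ) (φ : X → ℝ) : ℝ≥0∞ :=
  ⨆ (E : Set X) (_ : MeasurableSet E) (_ : 0 < μ E),
    μ E ^ (-1 + 1/p) * ∫⁻ x in E, ENNReal.ofReal |φ x| ∂μ

/-- The standard quasi-norm `‖φ‖_{p,∞} = sup { λ · μ({|φ| > λ})^{1/p} : λ > 0 }`. -/
noncomputable def weakNorm {X : Type*} [MeasurableSpace X] (μ : MeasureTheory.Measure X)
    (p : ℝ) (φ : X → ℝ) : ℝ≥0∞ :=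
  ⨆ (l : ℝ) (_ : 0 < l), ENNReal.ofReal l * μ {x | l < |φ x|} ^ (1/p)

/-- The standard quasi-norm for an `ℝ≥0∞`-valued function (such as `maxT μ T φ`). -/
noncomputable def weakNormE {X : Type*} [MeasurableSpace X] (μ : MeasureTheory.Measure X)
    (p : ℝ) (g : X → ℝ≥0∞) : ℝ≥0∞ :=
  ⨆ (l : ℝ) (_ : 0 < l), ENNReal.ofReal l * μ {x | ENNReal.ofReal l < g x} ^ (1/p)


open Topology

section Aux

variable {X : Type*} [MeasurableSpace X] {μ : Measure X}

lemma ennreal_div_two_pow_succ (a : ℝ≥0∞) (n : ℕ) : a / 2 ^ (n + 1) = a / 2 ^ n / 2 := by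
  rw [pow_succ, ENNReal.div_eq_inv_mul, ENNReal.div_eq_inv_mul, ENNReal.div_eq_inv_mul,
    ENNReal.mul_inv (by simp) (by simp)]
  ring

lemma exists_small [IsProbabilityMeasure μ] (hna : Nonatomic μ) {A : Set X}
    (hA : MeasurableSet A) (hpos : 0 < μ A) {ε : ℝ≥0∞} (hε : 0 < ε) :
    ∃ B, B ⊆ A ∧ MeasurableSet B ∧ 0 < μ B ∧ μ B < ε := by
  have key : ∀ n : ℕ, ∃ B, B ⊆ A ∧ MeasurableSet B ∧ 0 < μ B ∧ μ B ≤ μ A / 2 ^ n := by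
    intro n
    induction n with
    | zero => exact ⟨A, Subset.rfl, hA, hpos, by simp⟩
    | succ n ih =>
      obtain ⟨B, hBA, hBm, hBpos, hBle⟩ := ih
      obtain ⟨B', hB'B, hB'm, hB'pos, hB'lt⟩ := hna B hBm hBpos
      have hstep : μ A / 2 ^ (n + 1) = μ A / 2 ^ n / 2 := ennreal_div_two_pow_succ _ _
      rcases le_total (μ B') (μ B / 2) with h | h
      · refine ⟨B', hB'B.trans hBA, hB'm, hB'pos, ?_⟩
        rw [hstep]; exact h.trans (by gcongr)
      · refine ⟨B \ B', (diff_subset).trans hBA, hBm.diff hB'm, ?_, ?_⟩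
        · have hsum : μ (B \ B') + μ B' = μ B := by
            rw [add_comm, ← measure_inter_add_diff B hB'm,
              Set.inter_eq_self_of_subset_right hB'B]
          rw [pos_iff_ne_zero]
          intro h0
          rw [h0, zero_add] at hsum
          exact absurd hsum hB'lt.ne
        · have hd : μ (B \ B') = μ B - μ B' :=
            measure_diff hB'B hB'm.nullMeasurableSet (measure_ne_top μ B')
          rw [hd, hstep, tsub_le_iff_right]
          calc μ B = μ B / 2 + μ B / 2 := (ENNReal.add_halves _).symm
          _ ≤ μ A / 2 ^ n / 2 + μ B' := by gcongr
  obtain ⟨n, hn⟩ := ENNReal.exists_inv_two_pow_lt hε.ne'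
  obtain ⟨B, h1, h2, h3, h4⟩ := key n
  refine ⟨B, h1, h2, h3, lt_of_le_of_lt (h4.trans ?_) hn⟩
  calc μ A / 2 ^ n ≤ 1 / 2 ^ n := by gcongr; exact prob_le_one
  _ = 2⁻¹ ^ n := by rw [one_div, ENNReal.inv_pow]

lemma sierpinski [IsProbabilityMeasure μ] (hna : Nonatomic μ) {A : Set X}
    (hA : MeasurableSet A) {r : ℝ≥0∞} (hr : r ≤ μ A) :
    ∃ B, B ⊆ A ∧ MeasurableSet B ∧ μ B = r := by
  classical
  set Fam : Set X → Set (Set X) :=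
    fun s => {t | t ⊆ A \ s ∧ MeasurableSet t ∧ μ (s ∪ t) ≤ r} with hFam
  set δ : Set X → ℝ≥0∞ := fun s => sSup (μ '' Fam s) with hδ
  have hP : ∀ s : Set X, μ s ≤ r → ∃ t ∈ Fam s, δ s ≤ 2 * μ t := by
    intro s hs
    have hempty : ∅ ∈ Fam s := ⟨empty_subset _, MeasurableSet.empty, by simpa using hs⟩
    have hδle : δ s ≤ 1 := by
      refine sSup_le ?_
      rintro v ⟨t, -, rfl⟩
      exact prob_le_one
    rcases eq_or_ne (δ s) 0 with h0 | h0
    · exact ⟨∅, hempty, by simp [h0]⟩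
    · have hhalf : δ s / 2 < δ s :=
        ENNReal.half_lt_self h0 (lt_of_le_of_lt hδle one_lt_top).ne
      obtain ⟨v, ⟨t, htFam, rfl⟩, hv⟩ :=
        lt_sSup_iff.mp (show δ s / 2 < sSup (μ '' Fam s) from hhalf)
      refine ⟨t, htFam, ?_⟩
      calc δ s = δ s / 2 * 2 := by
            rw [ENNReal.div_mul_cancel (by simp) (by simp)]
      _ ≤ μ t * 2 := by gcongr
      _ = 2 * μ t := mul_comm _ _
  set T : Set X → Set X := fun s => if h : μ s ≤ r then (hP s h).choose else ∅ with hT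
  set seq : ℕ → Set X := fun n => Nat.rec ∅ (fun _ s => s ∪ T s) n with hseq
  have hseq_succ : ∀ n, seq (n + 1) = seq n ∪ T (seq n) := fun n => rfl
  have hseq0 : seq 0 = ∅ := rfl
  -- invariants
  have inv : ∀ n, MeasurableSet (seq n) ∧ seq n ⊆ A ∧ μ (seq n) ≤ r := by
    intro n
    induction n with
    | zero => simpa [hseq0] using le_trans (zero_le _) hr
    | succ n ih =>
      obtain ⟨hm, hsub, hle⟩ := ih
      have hTs := (hP (seq n) hle).choose_spec
      have hTeq : T (seq n) = (hP (seq n) hle).choose := by rw [hT]; simp [hle]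
      obtain ⟨⟨ht1, ht2, ht3⟩, -⟩ := hTs
      rw [hseq_succ, hTeq]
      exact ⟨hm.union ht2, union_subset hsub (ht1.trans diff_subset), ht3⟩
  have hTspec : ∀ n, T (seq n) ∈ Fam (seq n) ∧ δ (seq n) ≤ 2 * μ (T (seq n)) := by
    intro n
    have hle := (inv n).2.2
    have hTeq : T (seq n) = (hP (seq n) hle).choose := by rw [hT]; simp [hle]
    rw [hTeq]
    exact (hP (seq n) hle).choose_spec
  have hmono : Monotone seq := by
    refine monotone_nat_of_le_succ fun n => ?_
    rw [hseq_succ]; exact subset_union_left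
  set B : Set X := ⋃ n, seq n with hB
  have hBm : MeasurableSet B := MeasurableSet.iUnion fun n => (inv n).1
  have hBA : B ⊆ A := iUnion_subset fun n => (inv n).2.1
  have hμB : μ B ≤ r := by
    rw [hB, hmono.directed_le.measure_iUnion]
    exact iSup_le fun n => (inv n).2.2
  rcases eq_or_lt_of_le hμB with heq | hlt
  · exact ⟨B, hBA, hBm, heq⟩
  · exfalso
    -- find small t0 in A \ B
    have hABpos : 0 < μ (A \ B) := by
      rw [pos_iff_ne_zero]
      intro h0
      have : μ A ≤ μ B + μ (A \ B) := by
        calc μ A ≤ μ (B ∪ (A \ B)) := measure_mono (fun x hx => by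
          by_cases hxB : x ∈ B
          · exact Or.inl hxB
          · exact Or.inr ⟨hx, hxB⟩)
        _ ≤ μ B + μ (A \ B) := measure_union_le _ _
      rw [h0, add_zero] at this
      exact absurd (hr.trans this) (not_le.mpr hlt)
    obtain ⟨t0, ht0sub, ht0m, ht0pos, ht0lt⟩ :=
      exists_small hna (hA.diff hBm) hABpos (tsub_pos_of_lt hlt)
    have ht0Fam : ∀ n, t0 ∈ Fam (seq n) := by
      intro n
      refine ⟨ht0sub.trans (diff_subset_diff_right (subset_iUnion seq n)), ht0m, ?_⟩
      calc μ (seq n ∪ t0) ≤ μ (seq n) + μ t0 := measure_union_le _ _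
      _ ≤ μ B + (r - μ B) :=
          add_le_add (measure_mono (subset_iUnion seq n)) ht0lt.le
      _ = r := by rw [add_comm, tsub_add_cancel_of_le hμB]
    -- each chosen piece has measure ≥ μ t0 / 2
    have hbig : ∀ n, μ t0 / 2 ≤ μ (T (seq n)) := by
      intro n
      have h1 : μ t0 ≤ δ (seq n) := le_sSup ⟨t0, ht0Fam n, rfl⟩
      have h2 := (hTspec n).2
      rw [ENNReal.div_le_iff (by simp) (by simp)]
      calc μ t0 ≤ 2 * μ (T (seq n)) := h1.trans h2
      _ = μ (T (seq n)) * 2 := mul_comm _ _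
    -- the pieces are pairwise disjoint
    have hTsub : ∀ n, T (seq n) ⊆ seq (n + 1) := by
      intro n; rw [hseq_succ]; exact subset_union_right
    have hTdisj : ∀ n, Disjoint (T (seq n)) (seq n) := by
      intro n
      have := (hTspec n).1.1
      exact disjoint_left.mpr fun x hx => ((this hx).2 ·)
    have key : ∀ m n, m < n → Disjoint (T (seq m)) (T (seq n)) := by
      intro m n h
      have hsub : T (seq m) ⊆ seq n := (hTsub m).trans (hmono (Nat.succ_le_of_lt h))
      exact (hTdisj n).symm.mono_left hsub
    have hdisj : Pairwise (Function.onFun Disjoint fun n => T (seq n)) := by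
      intro m n hmn
      rcases hmn.lt_or_gt with h | h
      · exact key m n h
      · exact (key n m h).symm
    have hsum : ∑' n, μ (T (seq n)) = μ (⋃ n, T (seq n)) :=
      (measure_iUnion hdisj fun n => (hTspec n).1.2.1).symm
    have hfin : ∑' n, μ (T (seq n)) ≠ ∞ := by
      rw [hsum]; exact measure_ne_top μ _
    have hinf : (∑' _ : ℕ, μ t0 / 2) ≤ ∑' n, μ (T (seq n)) :=
      ENNReal.tsum_le_tsum hbig
    have h0 : μ t0 / 2 ≠ 0 := by
      simp only [ne_eq, ENNReal.div_eq_zero_iff]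
      push_neg
      exact ⟨ht0pos.ne', by simp⟩
    rw [ENNReal.tsum_const_eq_top_of_ne_zero h0] at hinf
    exact hfin (top_le_iff.mp hinf)

open Classical in
/-- Choice-based picker for a subset of prescribed measure. -/
noncomputable def pick (μ : Measure X) (S : Set X) (r : ℝ≥0∞) : Set X :=
  if h : ∃ B, B ⊆ S ∧ MeasurableSet B ∧ μ B = r then h.choose else ∅

open Classical in
lemma pick_subset (μ : Measure X) (S : Set X) (r : ℝ≥0∞) : pick μ S r ⊆ S := by
  rw [pick]
  split_ifs with h
  · exact h.choose_spec.1
  · exact empty_subset _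

lemma pick_spec [IsProbabilityMeasure μ] (hna : Nonatomic μ) {S : Set X}
    (hS : MeasurableSet S) {r : ℝ≥0∞} (hr : r ≤ μ S) :
    MeasurableSet (pick μ S r) ∧ μ (pick μ S r) = r := by
  have h : ∃ B, B ⊆ S ∧ MeasurableSet B ∧ μ B = r := sierpinski hna hS hr
  rw [pick]
  rw [dif_pos h]
  exact ⟨h.choose_spec.2.1, h.choose_spec.2.2⟩

/-- One dyadic refinement step. -/
noncomputable def nextRow (μ : Measure X) (f : ℕ → Set X) : ℕ → Set X := fun k =>
  if Even k then f (k / 2)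
  else f ((k - 1) / 2) ∪
    pick μ (f ((k + 1) / 2) \ f ((k - 1) / 2)) (μ (f ((k + 1) / 2) \ f ((k - 1) / 2)) / 2)

/-- Dyadic rows: `rows μ A n k` has measure `k * μ A / 2 ^ n` for `k ≤ 2 ^ n`. -/
noncomputable def rows (μ : Measure X) (A : Set X) : ℕ → ℕ → Set X
  | 0 => fun k => if k = 0 then ∅ else A
  | n + 1 => nextRow μ (rows μ A n)

lemma nextRow_even (μ : Measure X) (f : ℕ → Set X) (j : ℕ) : nextRow μ f (2 * j) = f j := by
  have h1 : 2 * j / 2 = j := by omega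
  rw [nextRow, if_pos (even_two_mul j), h1]

lemma nextRow_odd (μ : Measure X) (f : ℕ → Set X) (j : ℕ) :
    nextRow μ f (2 * j + 1) = f j ∪
      pick μ (f (j + 1) \ f j) (μ (f (j + 1) \ f j) / 2) := by
  have hodd : ¬ Even (2 * j + 1) := by simp [Nat.even_add_one]
  have h1 : (2 * j + 1 - 1) / 2 = j := by omega
  have h2 : (2 * j + 1 + 1) / 2 = j + 1 := by omega
  rw [nextRow, if_neg hodd, h1, h2]

structure RowSpec (μ : Measure X) (A : Set X) (n : ℕ) (f : ℕ → Set X) : Prop where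
  meas : ∀ k, MeasurableSet (f k)
  mono : ∀ k, f k ⊆ f (k + 1)
  sub : ∀ k, f k ⊆ A
  top : ∀ k, 2 ^ n ≤ k → f k = A
  measure : ∀ k ≤ 2 ^ n, μ (f k) = k * (μ A / 2 ^ n)

lemma rows_succ (μ : Measure X) (A : Set X) (n : ℕ) :
    rows μ A (n + 1) = nextRow μ (rows μ A n) := rfl

lemma rowSpec_mono' {A : Set X} {n : ℕ} {f : ℕ → Set X} (h : RowSpec μ A n f) :
    Monotone f :=
  monotone_nat_of_le_succ fun k => h.mono k

lemma rows_spec [IsProbabilityMeasure μ] (hna : Nonatomic μ) {A : Set X}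
    (hA : MeasurableSet A) : ∀ n, RowSpec μ A n (rows μ A n) := by
  intro n
  induction n with
  | zero =>
    constructor
    · intro k
      by_cases h : k = 0 <;> simp [rows, h, hA]
    · intro k
      by_cases h : k = 0 <;> simp [rows, h]
    · intro k
      by_cases h : k = 0 <;> simp [rows, h]
    · intro k hk
      have : k ≠ 0 := by omega
      simp [rows, this]
    · intro k hk
      interval_cases k <;> simp [rows]
  | succ n ih =>
    have hmono := rowSpec_mono' ih
    set f := rows μ A n with hf
    -- basic facts about the odd pieces
    have hSmeas : ∀ j, MeasurableSet (f (j + 1) \ f j) := fun j => (ih.meas _).diff (ih.meas _)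
    have hpick : ∀ j, MeasurableSet (pick μ (f (j + 1) \ f j) (μ (f (j + 1) \ f j) / 2)) ∧
        μ (pick μ (f (j + 1) \ f j) (μ (f (j + 1) \ f j) / 2)) = μ (f (j + 1) \ f j) / 2 :=
      fun j => pick_spec hna (hSmeas j) (ENNReal.half_le_self)
    have hpicksub : ∀ j, pick μ (f (j + 1) \ f j) (μ (f (j + 1) \ f j) / 2) ⊆ f (j + 1) \ f j :=
      fun j => pick_subset μ _ _
    constructor
    · intro k
      rcases Nat.even_or_odd k with ⟨j, hj⟩ | ⟨j, hj⟩
      · rw [hj, ← two_mul, rows_succ, nextRow_even]; exact ih.meas j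
      · rw [hj, rows_succ, nextRow_odd]
        exact (ih.meas j).union (hpick j).1
    · intro k
      rcases Nat.even_or_odd k with ⟨j, hj⟩ | ⟨j, hj⟩
      · rw [hj, ← two_mul, rows_succ, nextRow_even,
          show 2 * j + 1 = 2 * j + 1 from rfl, nextRow_odd]
        exact subset_union_left
      · rw [hj, rows_succ, nextRow_odd, show 2 * j + 1 + 1 = 2 * (j + 1) from by ring,
          nextRow_even]
        exact union_subset (hmono (Nat.le_succ j)) ((hpicksub j).trans diff_subset)
    · intro k
      rcases Nat.even_or_odd k with ⟨j, hj⟩ | ⟨j, hj⟩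
      · rw [hj, ← two_mul, rows_succ, nextRow_even]; exact ih.sub j
      · rw [hj, rows_succ, nextRow_odd]
        exact union_subset (ih.sub j) (((hpicksub j).trans diff_subset).trans (ih.sub (j + 1)))
    · intro k hk
      rcases Nat.even_or_odd k with ⟨j, hj⟩ | ⟨j, hj⟩
      · rw [hj, ← two_mul, rows_succ, nextRow_even]
        exact ih.top j (by omega)
      · rw [hj, rows_succ, nextRow_odd, ← hf]
        have hj' : 2 ^ n ≤ j := by omega
        rw [ih.top j hj', ih.top (j + 1) (by omega)]
        rw [Set.union_eq_self_of_subset_right]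
        calc pick μ (A \ A) (μ (A \ A) / 2) ⊆ A \ A := by
              have := hpicksub j
              rwa [ih.top j hj', ih.top (j + 1) (by omega)] at this
        _ ⊆ A := diff_subset
    · intro k hk
      have hhalf : μ A / 2 ^ (n + 1) = μ A / 2 ^ n / 2 := ennreal_div_two_pow_succ _ _
      have h2v : μ A / 2 ^ n = 2 * (μ A / 2 ^ (n + 1)) := by
        rw [ennreal_div_two_pow_succ, mul_comm,
          ENNReal.div_mul_cancel (by norm_num) (by norm_num)]
      rcases Nat.even_or_odd k with ⟨j, hj⟩ | ⟨j, hj⟩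
      · have hj2 : j ≤ 2 ^ n := by
          have : 2 ^ (n + 1) = 2 * 2 ^ n := by ring
          omega
        rw [hj, ← two_mul, rows_succ, nextRow_even, ← hf, ih.measure j hj2, h2v]
        push_cast
        ring
      · have hj2 : j + 1 ≤ 2 ^ n := by
          have : 2 ^ (n + 1) = 2 * 2 ^ n := by ring
          omega
        have hune : μ A / 2 ^ n ≠ ∞ :=
          (ENNReal.div_lt_top (measure_ne_top μ A) (by positivity)).ne
        have hjune : (j : ℝ≥0∞) * (μ A / 2 ^ n) ≠ ∞ :=
          ENNReal.mul_ne_top (ENNReal.natCast_ne_top j) hune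
        have hdiff : μ (f (j + 1) \ f j) = μ A / 2 ^ n := by
          rw [measure_diff (ih.mono j) (ih.meas j).nullMeasurableSet (measure_ne_top μ _),
            ih.measure (j + 1) hj2, ih.measure j (by omega)]
          push_cast
          rw [add_mul, one_mul, ENNReal.add_sub_cancel_left hjune]
        have hdisj : Disjoint (f j) (pick μ (f (j + 1) \ f j) (μ (f (j + 1) \ f j) / 2)) :=
          (disjoint_sdiff_right).mono_right (hpicksub j)
        rw [hj, rows_succ, nextRow_odd, ← hf, measure_union hdisj (hpick j).1,
          ih.measure j (by omega), (hpick j).2, hdiff, ← hhalf, h2v]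
        push_cast
        ring

lemma exists_monotone_family [IsProbabilityMeasure μ] (hna : Nonatomic μ) {A : Set X}
    (hA : MeasurableSet A) :
    ∃ C : ℝ → Set X, Monotone C ∧ (∀ t, MeasurableSet (C t)) ∧ (∀ t, C t ⊆ A) ∧
      ∀ t ∈ Icc (0 : ℝ) (μ A).toReal, μ (C t) = ENNReal.ofReal t := by
  have hspec := rows_spec hna hA
  set m : ℝ := (μ A).toReal with hm
  set K : ℝ → ℕ → ℕ := fun t n => ⌊t / m * 2 ^ n⌋₊ with hK
  refine ⟨fun t => ⋃ n, rows μ A n (K t n), ?_, ?_, ?_, ?_⟩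
  · -- monotone
    intro t t' htt'
    have hdiv : t / m ≤ t' / m := by
      rcases eq_or_lt_of_le (ENNReal.toReal_nonneg : (0:ℝ) ≤ m) with h0 | h0
      · have hm0 : m = 0 := h0.symm
        simp [hm0]
      · exact (div_le_div_iff_of_pos_right h0).mpr htt'
    refine iUnion_mono fun n => rowSpec_mono' (hspec n) (Nat.floor_mono ?_)
    exact mul_le_mul_of_nonneg_right hdiv (by positivity)
  · exact fun t => MeasurableSet.iUnion fun n => (hspec n).meas _
  · exact fun t => iUnion_subset fun n => (hspec n).sub _
  · rintro t ⟨ht0, htm⟩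
    rcases eq_or_ne (μ A) 0 with hA0 | hA0
    · have : t = 0 := le_antisymm (by simpa [hm, hA0] using htm) ht0
      subst this
      refine le_antisymm ?_ (by simp)
      calc μ (⋃ n, rows μ A n (K 0 n)) ≤ μ A :=
            measure_mono (iUnion_subset fun n => (hspec n).sub _)
      _ = ENNReal.ofReal 0 := by simp [hA0]
    · have hmpos : 0 < m := ENNReal.toReal_pos hA0 (measure_ne_top μ A)
      have hr0 : 0 ≤ t / m := div_nonneg ht0 hmpos.le
      have hr1 : t / m ≤ 1 := (div_le_one hmpos).mpr htm
      have hkle : ∀ n, K t n ≤ 2 ^ n := by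
        intro n
        have : t / m * 2 ^ n ≤ ((2 ^ n : ℕ) : ℝ) := by
          push_cast
          nlinarith [pow_pos (by norm_num : (0:ℝ) < 2) n]
        calc K t n ≤ ⌊((2 ^ n : ℕ) : ℝ)⌋₊ := Nat.floor_mono this
        _ = 2 ^ n := Nat.floor_natCast _
      have hchain : Monotone fun n => rows μ A n (K t n) := by
        refine monotone_nat_of_le_succ fun n => ?_
        have h1 : rows μ A n (K t n) = rows μ A (n + 1) (2 * K t n) := by
          rw [rows_succ, nextRow_even]
        have h2 : 2 * K t n ≤ K t (n + 1) := by
          rw [hK, Nat.le_floor_iff (by positivity)]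
          push_cast
          have hfl := Nat.floor_le (show (0:ℝ) ≤ t / m * 2 ^ n by positivity)
          rw [pow_succ]
          calc (2:ℝ) * ⌊t / m * 2 ^ n⌋₊ ≤ 2 * (t / m * 2 ^ n) := by linarith
          _ = t / m * (2 ^ n * 2) := by ring
        rw [h1]
        exact rowSpec_mono' (hspec (n + 1)) h2
      have htend := tendsto_measure_iUnion_atTop (μ := μ) hchain
      have hval : ∀ n, μ (rows μ A n (K t n)) = ENNReal.ofReal ((K t n) * m / 2 ^ n) := by
        intro n
        rw [(hspec n).measure _ (hkle n), ENNReal.ofReal_div_of_pos (by positivity),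
          ENNReal.ofReal_mul (by positivity), ENNReal.ofReal_natCast, hm,
          ENNReal.ofReal_toReal (measure_ne_top μ A), ENNReal.ofReal_pow (by norm_num),
          ENNReal.ofReal_ofNat, mul_div_assoc]
      have hreal : Tendsto (fun n => (K t n : ℝ) * m / 2 ^ n) atTop (𝓝 t) := by
        have hup : ∀ n, (K t n : ℝ) * m / 2 ^ n ≤ t := by
          intro n
          have hfl := Nat.floor_le (show (0:ℝ) ≤ t / m * 2 ^ n by positivity)
          have h2n : (0:ℝ) < 2 ^ n := by positivity
          have hid : t / m * 2 ^ n * m / 2 ^ n = t := by field_simp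
          calc (K t n : ℝ) * m / 2 ^ n ≤ t / m * 2 ^ n * m / 2 ^ n :=
                (div_le_div_iff_of_pos_right h2n).mpr
                  (mul_le_mul_of_nonneg_right hfl ENNReal.toReal_nonneg)
          _ = t := hid
        have hlo : ∀ n, t - m / 2 ^ n ≤ (K t n : ℝ) * m / 2 ^ n := by
          intro n
          have hfl : t / m * 2 ^ n - 1 ≤ (K t n : ℝ) := by
            have := Nat.lt_floor_add_one (t / m * 2 ^ n)
            linarith
          have h2n : (0:ℝ) < 2 ^ n := by positivity
          have hid : (t / m * 2 ^ n - 1) * (m / 2 ^ n) = t - m / 2 ^ n := by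
            field_simp
          calc t - m / 2 ^ n = (t / m * 2 ^ n - 1) * (m / 2 ^ n) := hid.symm
          _ ≤ (K t n : ℝ) * (m / 2 ^ n) :=
              mul_le_mul_of_nonneg_right hfl (by positivity)
          _ = (K t n : ℝ) * m / 2 ^ n := by ring
        have hlim : Tendsto (fun n : ℕ => t - m / 2 ^ n) atTop (𝓝 t) := by
          have h2 : Tendsto (fun n : ℕ => m / 2 ^ n) atTop (𝓝 0) := by
            have hg := tendsto_pow_atTop_nhds_zero_of_lt_one
              (by norm_num : (0:ℝ) ≤ 1/2) (by norm_num : (1:ℝ)/2 < 1)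
            have := hg.const_mul m
            simpa [div_pow, div_eq_mul_inv, one_div, inv_pow] using this
          simpa using tendsto_const_nhds.sub h2
        exact tendsto_of_tendsto_of_tendsto_of_le_of_le hlim tendsto_const_nhds hlo hup
      have := (ENNReal.tendsto_ofReal hreal)
      rw [show (fun n => ENNReal.ofReal ((K t n : ℝ) * m / 2 ^ n)) = fun n => μ (rows μ A n (K t n)) from funext fun n => (hval n).symm] at this
      exact tendsto_nhds_unique htend this

lemma lintegral_avg_le {φ : X → ℝ} (hφm : Measurable φ) {E I : Set X}
    (hE : MeasurableSet E) (hI : MeasurableSet I) (hEI : E ⊆ I) {c : ℝ}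
    (h1 : ∀ x ∈ E, φ x ≤ c) (h2 : ∀ x ∈ I \ E, c ≤ φ x) :
    μ I * ∫⁻ x in E, ENNReal.ofReal (φ x) ∂μ ≤ μ E * ∫⁻ x in I, ENNReal.ofReal (φ x) ∂μ := by
  set a := ∫⁻ x in E, ENNReal.ofReal (φ x) ∂μ with ha'
  set b := ∫⁻ x in I \ E, ENNReal.ofReal (φ x) ∂μ with hb'
  have hIsplit : ∫⁻ x in I, ENNReal.ofReal (φ x) ∂μ = a + b := by
    rw [← Set.union_diff_cancel hEI,
      lintegral_union (hI.diff hE) disjoint_sdiff_right]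
  have hμsplit : μ I = μ E + μ (I \ E) := by
    rw [← Set.union_diff_cancel hEI, measure_union disjoint_sdiff_right (hI.diff hE),
      Set.union_diff_cancel hEI]
  have ha : a ≤ ENNReal.ofReal c * μ E := by
    calc a ≤ ∫⁻ _x in E, ENNReal.ofReal c ∂μ :=
          setLIntegral_mono measurable_const fun x hx => ENNReal.ofReal_le_ofReal (h1 x hx)
    _ = ENNReal.ofReal c * μ E := setLIntegral_const E _
  have hb : ENNReal.ofReal c * μ (I \ E) ≤ b := by
    calc ENNReal.ofReal c * μ (I \ E) = ∫⁻ _x in I \ E, ENNReal.ofReal c ∂μ :=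
          (setLIntegral_const _ _).symm
    _ ≤ b := setLIntegral_mono (hφm.ennreal_ofReal) fun x hx => ENNReal.ofReal_le_ofReal (h2 x hx)
  rw [hIsplit, hμsplit]
  calc (μ E + μ (I \ E)) * a = μ E * a + μ (I \ E) * a := add_mul _ _ _
  _ ≤ μ E * a + μ (I \ E) * (ENNReal.ofReal c * μ E) := by gcongr
  _ = μ E * a + μ E * (ENNReal.ofReal c * μ (I \ E)) := by ring
  _ ≤ μ E * a + μ E * b := by gcongr
  _ = μ E * (a + b) := (mul_add _ _ _).symm

lemma lintegral_avg_ge {φ : X → ℝ} (hφm : Measurable φ) {E I : Set X}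
    (hE : MeasurableSet E) (hI : MeasurableSet I) (hEI : E ⊆ I) {c : ℝ}
    (h1 : ∀ x ∈ E, c ≤ φ x) (h2 : ∀ x ∈ I \ E, φ x ≤ c) :
    μ E * ∫⁻ x in I, ENNReal.ofReal (φ x) ∂μ ≤ μ I * ∫⁻ x in E, ENNReal.ofReal (φ x) ∂μ := by
  set a := ∫⁻ x in E, ENNReal.ofReal (φ x) ∂μ with ha'
  set b := ∫⁻ x in I \ E, ENNReal.ofReal (φ x) ∂μ with hb'
  have hIsplit : ∫⁻ x in I, ENNReal.ofReal (φ x) ∂μ = a + b := by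
    rw [← Set.union_diff_cancel hEI,
      lintegral_union (hI.diff hE) disjoint_sdiff_right]
  have hμsplit : μ I = μ E + μ (I \ E) := by
    rw [← Set.union_diff_cancel hEI, measure_union disjoint_sdiff_right (hI.diff hE),
      Set.union_diff_cancel hEI]
  have ha : ENNReal.ofReal c * μ E ≤ a := by
    calc ENNReal.ofReal c * μ E = ∫⁻ _x in E, ENNReal.ofReal c ∂μ :=
          (setLIntegral_const _ _).symm
    _ ≤ a := setLIntegral_mono (hφm.ennreal_ofReal) fun x hx => ENNReal.ofReal_le_ofReal (h1 x hx)
  have hb : b ≤ ENNReal.ofReal c * μ (I \ E) := by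
    calc b ≤ ∫⁻ _x in I \ E, ENNReal.ofReal c ∂μ :=
          setLIntegral_mono measurable_const fun x hx => ENNReal.ofReal_le_ofReal (h2 x hx)
    _ = ENNReal.ofReal c * μ (I \ E) := setLIntegral_const _ _
  rw [hIsplit, hμsplit]
  calc μ E * (a + b) = μ E * a + μ E * b := mul_add _ _ _
  _ ≤ μ E * a + μ E * (ENNReal.ofReal c * μ (I \ E)) := by gcongr
  _ = μ E * a + μ (I \ E) * (ENNReal.ofReal c * μ E) := by ring
  _ ≤ μ E * a + μ (I \ E) * a := by gcongr
  _ = (μ E + μ (I \ E)) * a := (add_mul _ _ _).symm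

lemma exists_low_set [IsProbabilityMeasure μ] (hna : Nonatomic μ)
    {φ : X → ℝ} (hφm : Measurable φ) (hφ0 : ∀ x, 0 ≤ φ x)
    {I : Set X} (hI : MeasurableSet I) {β : ℝ≥0∞} (hβ0 : 0 < β) (hβI : β < μ I) :
    ∃ E, E ⊆ I ∧ MeasurableSet E ∧ μ E = β ∧
      μ I * ∫⁻ x in E, ENNReal.ofReal (φ x) ∂μ ≤ β * ∫⁻ x in I, ENNReal.ofReal (φ x) ∂μ := by
  set T : Set ℝ := {c | β ≤ μ (I ∩ {x | φ x ≤ c})} with hT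
  have hTne : T.Nonempty := by
    have hcover : ⋃ n : ℕ, (I ∩ {x | φ x ≤ n}) = I := by
      apply Subset.antisymm (iUnion_subset fun n => inter_subset_left)
      intro x hx
      refine mem_iUnion.mpr ⟨⌈φ x⌉₊, hx, ?_⟩
      show φ x ≤ _
      exact Nat.le_ceil _
    have hmono : Monotone fun n : ℕ => I ∩ {x | φ x ≤ n} := by
      intro n m hnm
      refine inter_subset_inter_right _ fun x hx => ?_
      show φ x ≤ _
      exact le_trans hx (by exact_mod_cast hnm)
    have : μ I = ⨆ n : ℕ, μ (I ∩ {x | φ x ≤ n}) := by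
      conv_lhs => rw [← hcover]
      exact hmono.directed_le.measure_iUnion
    rw [this] at hβI
    obtain ⟨n, hn⟩ := lt_iSup_iff.mp hβI
    exact ⟨n, hn.le⟩
  have hTbdd : BddBelow T := by
    refine ⟨0, fun c hc => ?_⟩
    by_contra hc0
    push_neg at hc0
    have : I ∩ {x | φ x ≤ c} = ∅ := by
      ext x
      simp only [mem_inter_iff, mem_setOf_eq, mem_empty_iff_false, iff_false, not_and]
      exact fun _ h => absurd (le_trans (hφ0 x) h) (not_le.mpr hc0)
    rw [hT] at hc
    simp only [mem_setOf_eq, this, measure_empty, nonpos_iff_eq_zero] at hc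
    exact hβ0.ne' hc
  set c₀ : ℝ := sInf T with hc₀
  have hup : β ≤ μ (I ∩ {x | φ x ≤ c₀}) := by
    set a : ℕ → Set X := fun n => I ∩ {x | φ x ≤ c₀ + 1 / (n + 1)} with haS
    have hInter : ⋂ n, a n = I ∩ {x | φ x ≤ c₀} := by
      ext x
      simp only [haS, mem_iInter, mem_inter_iff, mem_setOf_eq]
      constructor
      · intro h
        refine ⟨(h 0).1, ?_⟩
        by_contra hgt
        push_neg at hgt
        obtain ⟨n, hn⟩ := exists_nat_one_div_lt (sub_pos.mpr hgt)
        have := (h n).2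
        linarith
      · intro ⟨h1, h2⟩ n
        refine ⟨h1, h2.trans (le_add_of_nonneg_right (by positivity))⟩
    have hanti : Antitone a := by
      intro n m hnm
      refine inter_subset_inter_right _ fun x hx => ?_
      have h1 : (1 : ℝ) / (m + 1) ≤ 1 / (n + 1) := by
        apply one_div_le_one_div_of_le (by positivity)
        exact_mod_cast add_le_add_left (Nat.cast_le.mpr hnm) 1
      show φ x ≤ _
      have hx' : φ x ≤ c₀ + 1 / (m + 1) := hx
      linarith
    have htend : Tendsto (fun n => μ (a n)) atTop (𝓝 (μ (⋂ n, a n))) := by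
      apply tendsto_measure_iInter_atTop
        (fun n => (hI.inter (hφm measurableSet_Iic)).nullMeasurableSet) hanti
        ⟨0, measure_ne_top μ _⟩
    rw [hInter] at htend
    refine ge_of_tendsto htend (Eventually.of_forall fun n => ?_)
    obtain ⟨c, hcT, hclt⟩ := exists_lt_of_csInf_lt hTne
      (lt_add_of_pos_right c₀ (by positivity : (0:ℝ) < 1 / (n + 1)))
    calc β ≤ μ (I ∩ {x | φ x ≤ c}) := hcT
    _ ≤ μ (a n) := by
        apply measure_mono
        refine inter_subset_inter_right _ fun x hx => ?_
        show φ x ≤ _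
        exact le_trans hx hclt.le
  have hlo : μ (I ∩ {x | φ x < c₀}) ≤ β := by
    set b : ℕ → Set X := fun n => I ∩ {x | φ x ≤ c₀ - 1 / (n + 1)} with hbS
    have hU : ⋃ n, b n = I ∩ {x | φ x < c₀} := by
      ext x
      simp only [hbS, mem_iUnion, mem_inter_iff, mem_setOf_eq]
      constructor
      · rintro ⟨n, h1, h2⟩
        have hpos : (0:ℝ) < 1 / ((n:ℝ) + 1) := by positivity
        exact ⟨h1, by linarith⟩
      · rintro ⟨h1, h2⟩
        obtain ⟨n, hn⟩ := exists_nat_one_div_lt (sub_pos.mpr h2)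
        exact ⟨n, h1, by linarith⟩
    have hmono : Monotone b := by
      intro n m hnm
      refine inter_subset_inter_right _ fun x hx => ?_
      have h1 : (1 : ℝ) / (m + 1) ≤ 1 / (n + 1) := by
        apply one_div_le_one_div_of_le (by positivity)
        exact_mod_cast add_le_add_left (Nat.cast_le.mpr hnm) 1
      show φ x ≤ _
      have hx' : φ x ≤ c₀ - 1 / (n + 1) := hx
      linarith
    rw [← hU, hmono.directed_le.measure_iUnion]
    refine iSup_le fun n => ?_
    have hnotT : (c₀ - 1 / (n + 1)) ∉ T := by
      have hpos : (0:ℝ) < 1 / ((n:ℝ) + 1) := by positivity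
      exact notMem_of_lt_csInf (by linarith) hTbdd
    rw [hT, mem_setOf_eq, not_le] at hnotT
    exact hnotT.le
  -- build the set
  set L : Set X := I ∩ {x | φ x < c₀} with hL
  set M : Set X := I ∩ {x | φ x = c₀} with hM
  have hLm : MeasurableSet L := hI.inter (hφm measurableSet_Iio)
  have hMm : MeasurableSet M := hI.inter (hφm (measurableSet_singleton c₀))
  have hsub : β - μ L ≤ μ M := by
    rw [tsub_le_iff_right]
    calc β ≤ μ (I ∩ {x | φ x ≤ c₀}) := hup
    _ ≤ μ (L ∪ M) := by
        apply measure_mono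
        rintro x ⟨hxI, hx⟩
        have hx' : φ x ≤ c₀ := hx
        rcases lt_or_eq_of_le hx' with h | h
        · exact Or.inl ⟨hxI, h⟩
        · exact Or.inr ⟨hxI, h⟩
    _ ≤ μ L + μ M := measure_union_le _ _
    _ = μ M + μ L := add_comm _ _
  obtain ⟨S, hSM, hSm, hSμ⟩ := sierpinski hna hMm hsub
  refine ⟨L ∪ S, union_subset inter_subset_left (hSM.trans inter_subset_left),
    hLm.union hSm, ?_, ?_⟩
  · have hdisj : Disjoint L S := by
      rw [disjoint_left]
      intro x hxL hxS
      exact absurd (hSM hxS).2 (ne_of_lt hxL.2)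
    rw [measure_union hdisj hSm, hSμ, add_tsub_cancel_of_le hlo]
  · have hμE : μ (L ∪ S) = β := by
      have hdisj : Disjoint L S := by
        rw [disjoint_left]
        intro x hxL hxS
        exact absurd (hSM hxS).2 (ne_of_lt hxL.2)
      rw [measure_union hdisj hSm, hSμ, add_tsub_cancel_of_le hlo]
    rw [← hμE]
    apply lintegral_avg_le hφm (hLm.union hSm) hI
      (union_subset inter_subset_left (hSM.trans inter_subset_left))
      (c := c₀)
    · rintro x (hx | hx)
      · exact hx.2.le
      · exact le_of_eq (hSM hx).2
    · rintro x ⟨hxI, hxE⟩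
      rw [mem_union] at hxE
      push_neg at hxE
      have := hxE.1
      rw [hL, mem_inter_iff, not_and_or] at this
      rcases this with h | h
      · exact absurd hxI h
      · exact not_lt.mp h

lemma exists_high_set [IsProbabilityMeasure μ] (hna : Nonatomic μ)
    {φ : X → ℝ} (hφm : Measurable φ) (hφ0 : ∀ x, 0 ≤ φ x)
    {I : Set X} (hI : MeasurableSet I) {β : ℝ≥0∞} (hβ0 : 0 < β) (hβI : β < μ I) :
    ∃ E, E ⊆ I ∧ MeasurableSet E ∧ μ E = β ∧
      β * ∫⁻ x in I, ENNReal.ofReal (φ x) ∂μ ≤ μ I * ∫⁻ x in E, ENNReal.ofReal (φ x) ∂μ := by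
  set U : Set ℝ := {c | μ (I ∩ {x | c < φ x}) ≤ β} with hU
  have hUne : U.Nonempty := by
    set u : ℕ → Set X := fun n => I ∩ {x | (n : ℝ) < φ x} with hu
    have hanti : Antitone u := by
      intro n m hnm
      refine inter_subset_inter_right _ fun x hx => ?_
      show (n : ℝ) < φ x
      have hx' : (m : ℝ) < φ x := hx
      have : (n : ℝ) ≤ m := by exact_mod_cast hnm
      linarith
    have hInter : ⋂ n, u n = ∅ := by
      ext x
      simp only [hu, mem_iInter, mem_inter_iff, mem_setOf_eq, mem_empty_iff_false, iff_false,
        not_forall]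
      exact ⟨⌈φ x⌉₊, fun h => absurd h.2 (not_lt.mpr (Nat.le_ceil _))⟩
    have htend : Tendsto (fun n => μ (u n)) atTop (𝓝 (μ (⋂ n, u n))) :=
      tendsto_measure_iInter_atTop
        (fun n => (hI.inter (hφm measurableSet_Ioi)).nullMeasurableSet) hanti
        ⟨0, measure_ne_top μ _⟩
    rw [hInter, measure_empty] at htend
    obtain ⟨n, hn⟩ := (htend.eventually (Iio_mem_nhds hβ0)).exists
    exact ⟨n, hn.le⟩
  have hUbdd : BddBelow U := by
    refine ⟨0, fun c hc => ?_⟩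
    by_contra hc0
    push_neg at hc0
    have heq : I ∩ {x | c < φ x} = I :=
      inter_eq_self_of_subset_left fun x _ => show c < φ x from lt_of_lt_of_le hc0 (hφ0 x)
    rw [hU, mem_setOf_eq, heq] at hc
    exact absurd hc (not_le.mpr hβI)
  set c₀ : ℝ := sInf U with hc₀
  have hhi : μ (I ∩ {x | c₀ < φ x}) ≤ β := by
    set v : ℕ → Set X := fun n => I ∩ {x | c₀ + 1 / (n + 1) < φ x} with hv
    have hmono : Monotone v := by
      intro n m hnm
      refine inter_subset_inter_right _ fun x hx => ?_
      have h1 : (1 : ℝ) / (m + 1) ≤ 1 / (n + 1) := by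
        apply one_div_le_one_div_of_le (by positivity)
        exact_mod_cast add_le_add_left (Nat.cast_le.mpr hnm) 1
      show c₀ + 1 / ((m:ℝ) + 1) < φ x
      have hx' : c₀ + 1 / ((n:ℝ) + 1) < φ x := hx
      linarith
    have hUnion : ⋃ n, v n = I ∩ {x | c₀ < φ x} := by
      ext x
      simp only [hv, mem_iUnion, mem_inter_iff, mem_setOf_eq]
      constructor
      · rintro ⟨n, h1, h2⟩
        have hpos : (0:ℝ) < 1 / ((n:ℝ) + 1) := by positivity
        exact ⟨h1, by linarith⟩
      · rintro ⟨h1, h2⟩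
        obtain ⟨n, hn⟩ := exists_nat_one_div_lt (sub_pos.mpr h2)
        exact ⟨n, h1, by linarith⟩
    rw [← hUnion, hmono.directed_le.measure_iUnion]
    refine iSup_le fun n => ?_
    obtain ⟨c, hcU, hclt⟩ := exists_lt_of_csInf_lt hUne
      (lt_add_of_pos_right c₀ (by positivity : (0:ℝ) < 1 / (n + 1)))
    calc μ (v n) ≤ μ (I ∩ {x | c < φ x}) := by
          apply measure_mono
          refine inter_subset_inter_right _ fun x hx => ?_
          show c < φ x
          have hx' : c₀ + 1 / ((n:ℝ) + 1) < φ x := hx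
          linarith
    _ ≤ β := hcU
  have hge : β ≤ μ (I ∩ {x | c₀ ≤ φ x}) := by
    set w : ℕ → Set X := fun n => I ∩ {x | c₀ - 1 / (n + 1) < φ x} with hw
    have hanti : Antitone w := by
      intro n m hnm
      refine inter_subset_inter_right _ fun x hx => ?_
      have h1 : (1 : ℝ) / (m + 1) ≤ 1 / (n + 1) := by
        apply one_div_le_one_div_of_le (by positivity)
        exact_mod_cast add_le_add_left (Nat.cast_le.mpr hnm) 1
      show c₀ - 1 / ((n:ℝ) + 1) < φ x
      have hx' : c₀ - 1 / ((m:ℝ) + 1) < φ x := hx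
      linarith
    have hInter : ⋂ n, w n = I ∩ {x | c₀ ≤ φ x} := by
      ext x
      simp only [hw, mem_iInter, mem_inter_iff, mem_setOf_eq]
      constructor
      · intro h
        refine ⟨(h 0).1, ?_⟩
        by_contra hgt
        push_neg at hgt
        obtain ⟨n, hn⟩ := exists_nat_one_div_lt (sub_pos.mpr hgt)
        have := (h n).2
        linarith
      · intro ⟨h1, h2⟩ n
        have hpos : (0:ℝ) < 1 / ((n:ℝ) + 1) := by positivity
        exact ⟨h1, by linarith⟩
    have htend : Tendsto (fun n => μ (w n)) atTop (𝓝 (μ (⋂ n, w n))) :=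
      tendsto_measure_iInter_atTop
        (fun n => (hI.inter (hφm measurableSet_Ioi)).nullMeasurableSet) hanti
        ⟨0, measure_ne_top μ _⟩
    rw [hInter] at htend
    refine ge_of_tendsto htend (Eventually.of_forall fun n => ?_)
    have hnotU : (c₀ - 1 / (n + 1)) ∉ U := by
      have hpos : (0:ℝ) < 1 / ((n:ℝ) + 1) := by positivity
      exact notMem_of_lt_csInf (by linarith) hUbdd
    rw [hU, mem_setOf_eq, not_le] at hnotU
    exact hnotU.le
  set H : Set X := I ∩ {x | c₀ < φ x} with hH
  set M : Set X := I ∩ {x | φ x = c₀} with hM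
  have hHm : MeasurableSet H := hI.inter (hφm measurableSet_Ioi)
  have hMm : MeasurableSet M := hI.inter (hφm (measurableSet_singleton c₀))
  have hsub : β - μ H ≤ μ M := by
    rw [tsub_le_iff_right]
    calc β ≤ μ (I ∩ {x | c₀ ≤ φ x}) := hge
    _ ≤ μ (H ∪ M) := by
        apply measure_mono
        rintro x ⟨hxI, hx⟩
        have hx' : c₀ ≤ φ x := hx
        rcases lt_or_eq_of_le hx' with h | h
        · exact Or.inl ⟨hxI, h⟩
        · exact Or.inr ⟨hxI, h.symm⟩
    _ ≤ μ H + μ M := measure_union_le _ _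
    _ = μ M + μ H := add_comm _ _
  obtain ⟨S, hSM, hSm, hSμ⟩ := sierpinski hna hMm hsub
  have hdisj : Disjoint H S := by
    rw [disjoint_left]
    intro x hxH hxS
    exact absurd (hSM hxS).2 (ne_of_gt hxH.2)
  have hμE : μ (H ∪ S) = β := by
    rw [measure_union hdisj hSm, hSμ, add_tsub_cancel_of_le hhi]
  refine ⟨H ∪ S, union_subset inter_subset_left (hSM.trans inter_subset_left),
    hHm.union hSm, hμE, ?_⟩
  rw [← hμE]
  apply lintegral_avg_ge hφm (hHm.union hSm) hI
    (union_subset inter_subset_left (hSM.trans inter_subset_left))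
    (c := c₀)
  · rintro x (hx | hx)
    · exact hx.2.le
    · exact le_of_eq (hSM hx).2.symm
  · rintro x ⟨hxI, hxE⟩
    rw [mem_union] at hxE
    push_neg at hxE
    have := hxE.1
    rw [hH, mem_inter_iff, not_and_or] at this
    rcases this with h | h
    · exact absurd hxI h
    · exact not_lt.mp h

lemma cont_lemma {φ : X → ℝ} (hint : ∫⁻ x, ENNReal.ofReal (φ x) ∂μ ≠ ∞)
    [IsFiniteMeasure μ]
    {C : ℝ → Set X} (hCm : ∀ t, MeasurableSet (C t)) (hmono : Monotone C)
    {b : ℝ} (hμC : ∀ t ∈ Icc (0:ℝ) b, μ (C t) = ENNReal.ofReal t) :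
    ContinuousOn (fun t => ((μ.withDensity fun x => ENNReal.ofReal (φ x)) (C t)).toReal)
      (Icc 0 b) := by
  set ν := μ.withDensity fun x => ENNReal.ofReal (φ x) with hν
  have hνfin : ∀ S, ν S ≠ ∞ := by
    intro S
    refine ne_top_of_le_ne_top hint ?_
    calc ν S ≤ ν univ := measure_mono (subset_univ S)
    _ = ∫⁻ x, ENNReal.ofReal (φ x) ∂μ := by
        rw [hν, withDensity_apply _ MeasurableSet.univ, Measure.restrict_univ]
  rw [Metric.continuousOn_iff]
  intro t ht ε hε
  obtain ⟨δ, hδ0, hδ⟩ := exists_pos_setLIntegral_lt_of_measure_lt hint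
    (ε := ENNReal.ofReal ε) (ENNReal.ofReal_pos.mpr hε).ne'
  have hδ'pos : (0:ℝ) < (min δ 1).toReal := by
    apply ENNReal.toReal_pos
    · exact (lt_min hδ0 zero_lt_one).ne'
    · exact ne_top_of_le_ne_top one_ne_top (min_le_right _ _)
  set δ' := (min δ 1).toReal with hδ'
  have key : ∀ y z, y ∈ Icc (0:ℝ) b → z ∈ Icc (0:ℝ) b → z ≤ y → y - z < δ' →
      (ν (C y)).toReal - (ν (C z)).toReal < ε ∧
      (ν (C z)).toReal ≤ (ν (C y)).toReal := by
    intro y z hy hz hzy hlt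
    have hsub : C z ⊆ C y := hmono hzy
    constructor
    · have hμdiff : μ (C y \ C z) < δ := by
        rw [measure_diff hsub (hCm z).nullMeasurableSet (measure_ne_top μ _),
          hμC y hy, hμC z hz, ← ENNReal.ofReal_sub _ hz.1]
        calc ENNReal.ofReal (y - z) < ENNReal.ofReal δ' :=
              (ENNReal.ofReal_lt_ofReal_iff hδ'pos).mpr hlt
        _ = min δ 1 := ENNReal.ofReal_toReal (ne_top_of_le_ne_top one_ne_top (min_le_right _ _))
        _ ≤ δ := min_le_left _ _
      have hνdiff : ν (C y \ C z) < ENNReal.ofReal ε := by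
        rw [hν, withDensity_apply _ ((hCm y).diff (hCm z))]
        exact hδ _ hμdiff
      have hsplit : ν (C z) + ν (C y \ C z) = ν (C y) := by
        rw [← measure_inter_add_diff (C y) (hCm z), Set.inter_eq_self_of_subset_right hsub]
      have := ENNReal.toReal_add (hνfin (C z)) (hνfin (C y \ C z))
      rw [hsplit] at this
      rw [this]
      have hfin : ν (C y \ C z) ≠ ∞ := hνfin _
      have := (ENNReal.lt_ofReal_iff_toReal_lt hfin).mp hνdiff
      linarith
    · exact ENNReal.toReal_le_toReal (hνfin _) (hνfin _) |>.mpr (measure_mono hsub)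
  refine ⟨δ', hδ'pos, fun y hy hdist => ?_⟩
  rw [Real.dist_eq] at hdist
  rw [Real.dist_eq]
  rcases le_total y t with h | h
  · obtain ⟨hlt, hle⟩ := key t y ht hy h (lt_of_le_of_lt (le_abs_self (t - y)) (by rwa [abs_sub_comm] at hdist))
    rw [abs_sub_comm, abs_of_nonneg (by linarith)]
    linarith
  · obtain ⟨hlt, hle⟩ := key y t hy ht h (lt_of_le_of_lt (le_abs_self (y - t)) hdist)
    rw [abs_of_nonneg (by linarith)]
    linarith

end Aux

/-- Lemma 2.1: on a non-atomic probability space, for any measurable `I` with `μ I > 0`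
and any `β ∈ (0, μ I]` there is a measurable `E ⊆ I` with `μ E = β` and the same average. -/
theorem stmt0 {X : Type*} [MeasurableSpace X] (μ : MeasureTheory.Measure X)
    [IsProbabilityMeasure μ] (hna : Nonatomic μ)
    (φ : X → ℝ) (hφm : Measurable φ) (hφ0 : ∀ x, 0 ≤ φ x) (hφi : Integrable φ μ)
    (I : Set X) (hI : MeasurableSet I) (hIpos : 0 < μ I)
    (s : ℝ) (hs : s = (μ I).toReal⁻¹ * ∫ x in I, φ x ∂μ)
    (β : ℝ≥0∞) (hβ0 : 0 < β) (hβI : β ≤ μ I) :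
    ∃ E : Set X, E ⊆ I ∧ MeasurableSet E ∧ μ E = β ∧
      (μ E).toReal⁻¹ * ∫ x in E, φ x ∂μ = s := by
  rcases eq_or_lt_of_le hβI with heq | hlt
  · exact ⟨I, Subset.rfl, hI, heq.symm, hs.symm⟩
  set ν := μ.withDensity fun x => ENNReal.ofReal (φ x) with hν
  have hint : ∫⁻ x, ENNReal.ofReal (φ x) ∂μ ≠ ∞ := by
    have h := hφi.hasFiniteIntegral
    rw [hasFiniteIntegral_iff_ofReal (ae_of_all μ hφ0)] at h
    exact h.ne
  have hνfin : ∀ S, ν S ≠ ∞ := by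
    intro S
    refine ne_top_of_le_ne_top hint ?_
    calc ν S ≤ ν univ := measure_mono (subset_univ S)
    _ = ∫⁻ x, ENNReal.ofReal (φ x) ∂μ := by
        rw [hν, withDensity_apply _ MeasurableSet.univ, Measure.restrict_univ]
  have hI2R : ∀ S : Set X, MeasurableSet S → ∫ x in S, φ x ∂μ = (ν S).toReal := by
    intro S hS
    rw [hν, withDensity_apply _ hS,
      integral_eq_lintegral_of_nonneg_ae (ae_of_all _ fun x => hφ0 x)
        hφm.aestronglyMeasurable.restrict]
  have hβfin : β ≠ ∞ := (hβI.trans_lt (measure_lt_top μ I)).ne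
  have hβtR : 0 < β.toReal := ENNReal.toReal_pos hβ0.ne' hβfin
  have hItR : 0 < (μ I).toReal := ENNReal.toReal_pos hIpos.ne' (measure_ne_top μ I)
  obtain ⟨E0, hE0I, hE0m, hE0μ, hE0le⟩ := exists_low_set hna hφm hφ0 hI hβ0 hlt
  obtain ⟨E1, hE1I, hE1m, hE1μ, hE1ge⟩ := exists_high_set hna hφm hφ0 hI hβ0 hlt
  have hE0le' : μ I * ν E0 ≤ β * ν I := by
    rw [hν, withDensity_apply _ hE0m, withDensity_apply _ hI]; exact hE0le
  have hE1ge' : β * ν I ≤ μ I * ν E1 := by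
    rw [hν, withDensity_apply _ hE1m, withDensity_apply _ hI]; exact hE1ge
  set K := E0 ∩ E1 with hK
  set D0 := E0 \ E1 with hD0
  set D1 := E1 \ E0 with hD1
  have hKm : MeasurableSet K := hE0m.inter hE1m
  have hD0m : MeasurableSet D0 := hE0m.diff hE1m
  have hD1m : MeasurableSet D1 := hE1m.diff hE0m
  have hKD0 : μ K + μ D0 = β := by
    rw [hK, hD0, measure_inter_add_diff E0 hE1m, hE0μ]
  have hKD1 : μ K + μ D1 = β := by
    rw [hK, hD1, inter_comm, measure_inter_add_diff E1 hE0m, hE1μ]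
  have hd : μ D1 = μ D0 :=
    (ENNReal.add_right_inj (measure_ne_top μ K)).mp (hKD1.trans hKD0.symm)
  set d := μ D0 with hdd
  set dr := d.toReal with hdr
  obtain ⟨C0, hC0mono, hC0meas, hC0sub, hC0μ⟩ := exists_monotone_family hna hD0m
  obtain ⟨C1, hC1mono, hC1meas, hC1sub, hC1μ⟩ := exists_monotone_family hna hD1m
  have hC1μ' : ∀ t ∈ Icc (0:ℝ) dr, μ (C1 t) = ENNReal.ofReal t := by
    intro t ht
    exact hC1μ t (by rwa [hd])
  have hC0μ' : ∀ t ∈ Icc (0:ℝ) dr, μ (C0 t) = ENNReal.ofReal t := fun t ht => hC0μ t ht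
  set Efam : ℝ → Set X := fun t => K ∪ ((D0 \ C0 t) ∪ C1 t) with hEfam
  have hEm : ∀ t, MeasurableSet (Efam t) :=
    fun t => hKm.union (((hD0m.diff (hC0meas t)).union (hC1meas t)))
  have hEsub : ∀ t, Efam t ⊆ I := by
    intro t
    apply union_subset ((inter_subset_left).trans hE0I)
    apply union_subset ((diff_subset).trans ((diff_subset).trans hE0I))
    exact (hC1sub t).trans ((diff_subset).trans hE1I)
  have hdisjK : ∀ t, Disjoint K ((D0 \ C0 t) ∪ C1 t) := by
    intro t
    apply Disjoint.union_right
    · exact (disjoint_left.mpr fun x hx hx2 => (hx2.2 hx.2)).mono_right diff_subset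
    · exact (disjoint_left.mpr fun x hx hx2 => (hx2.2 hx.1)).mono_right (hC1sub t)
  have hdisj01 : ∀ t, Disjoint (D0 \ C0 t) (C1 t) :=
    fun t => ((disjoint_left.mpr fun x hx hx2 => hx2.2 hx.1).mono_left diff_subset).mono_right
      (hC1sub t)
  -- measure of the interpolating family (w.r.t. any measure ρ for reuse)
  have hsplit : ∀ (ρ : Measure X) t, ρ (Efam t) = ρ K + (ρ (D0 \ C0 t) + ρ (C1 t)) := by
    intro ρ t
    rw [hEfam]
    rw [measure_union (hdisjK t) ((hD0m.diff (hC0meas t)).union (hC1meas t)),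
      measure_union (hdisj01 t) (hC1meas t)]
  have hEμ : ∀ t ∈ Icc (0:ℝ) dr, μ (Efam t) = β := by
    intro t ht
    have hofle : ENNReal.ofReal t ≤ d := ENNReal.ofReal_le_of_le_toReal ht.2
    rw [hsplit μ t, measure_diff (hC0sub t) (hC0meas t).nullMeasurableSet (measure_ne_top μ _),
      hC0μ' t ht, hC1μ' t ht, tsub_add_cancel_of_le hofle, hKD0]
  -- ν-values split
  have hνdiffval : ∀ t, ν (D0 \ C0 t) = ν D0 - ν (C0 t) :=
    fun t => measure_diff (hC0sub t) (hC0meas t).nullMeasurableSet (hνfin _)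
  set g : ℝ → ℝ :=
    fun t => (ν K).toReal + (((ν D0).toReal - (ν (C0 t)).toReal) + (ν (C1 t)).toReal) with hg
  have hgval : ∀ t, (ν (Efam t)).toReal = g t := by
    intro t
    rw [hsplit ν t, hνdiffval t, ENNReal.toReal_add (hνfin _) (ENNReal.add_ne_top.mpr
      ⟨(tsub_le_self.trans_lt (hνfin _).lt_top).ne, hνfin _⟩),
      ENNReal.toReal_add (tsub_le_self.trans_lt (hνfin _).lt_top).ne (hνfin _),
      ENNReal.toReal_sub_of_le (measure_mono (hC0sub t)) (hνfin _)]
  have hgcont : ContinuousOn g (Icc 0 dr) := by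
    apply continuousOn_const.add
    apply ContinuousOn.add
    · exact continuousOn_const.sub (cont_lemma hint hC0meas hC0mono hC0μ')
    · exact cont_lemma hint hC1meas hC1mono hC1μ'
  -- endpoints
  have hzero : ∀ (T : Set X), μ T = 0 → ν T = 0 :=
    fun T hT => (withDensity_absolutelyContinuous μ _) hT
  have hg0 : g 0 = (ν E0).toReal := by
    have h0dr : (0:ℝ) ∈ Icc (0:ℝ) dr := ⟨le_refl _, ENNReal.toReal_nonneg⟩
    have h1 : ν (C0 0) = 0 := hzero _ (by rw [hC0μ' 0 h0dr]; simp)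
    have h2 : ν (C1 0) = 0 := hzero _ (by rw [hC1μ' 0 h0dr]; simp)
    have h3 : ν K + ν D0 = ν E0 := by rw [hK, hD0, measure_inter_add_diff E0 hE1m]
    rw [hg]
    simp only [h1, h2, ENNReal.toReal_zero, sub_zero, add_zero]
    rw [← h3, ENNReal.toReal_add (hνfin _) (hνfin _)]
  have hgdr : g dr = (ν E1).toReal := by
    have hdrIcc : dr ∈ Icc (0:ℝ) dr := ⟨ENNReal.toReal_nonneg, le_refl _⟩
    have hofdr : ENNReal.ofReal dr = d := ENNReal.ofReal_toReal (measure_ne_top μ D0)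
    have h1 : ν (C0 dr) = ν D0 := by
      have hμ0 : μ (D0 \ C0 dr) = 0 := by
        rw [measure_diff (hC0sub dr) (hC0meas dr).nullMeasurableSet (measure_ne_top μ _),
          hC0μ' dr hdrIcc, hofdr, tsub_self]
      have := hzero _ hμ0
      rw [hνdiffval dr] at this
      have hle := measure_mono (μ := ν) (hC0sub dr)
      exact le_antisymm hle (tsub_eq_zero_iff_le.mp this)
    have h2 : ν (C1 dr) = ν D1 := by
      have hμ0 : μ (D1 \ C1 dr) = 0 := by
        rw [measure_diff (hC1sub dr) (hC1meas dr).nullMeasurableSet (measure_ne_top μ _),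
          hC1μ' dr hdrIcc, hofdr, ← hd, tsub_self]
      have hνd := hzero _ hμ0
      rw [measure_diff (hC1sub dr) (hC1meas dr).nullMeasurableSet (hνfin _)] at hνd
      have hle := measure_mono (μ := ν) (hC1sub dr)
      exact le_antisymm hle (tsub_eq_zero_iff_le.mp hνd)
    have h3 : ν K + ν D1 = ν E1 := by rw [hK, hD1, inter_comm, measure_inter_add_diff E1 hE0m]
    rw [hg]
    simp only [h1, h2, sub_self, zero_add]
    rw [← h3, ENNReal.toReal_add (hνfin _) (hνfin _)]
  -- endpoints vs target value
  set c : ℝ := β.toReal * s with hc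
  have hsν : s = (μ I).toReal⁻¹ * (ν I).toReal := by rw [hs, hI2R I hI]
  have hg0le : g 0 ≤ c := by
    have key := ENNReal.toReal_mono (ENNReal.mul_ne_top hβfin (hνfin I)) hE0le'
    rw [ENNReal.toReal_mul, ENNReal.toReal_mul] at key
    rw [hg0, hc, hsν]
    have hrhs : β.toReal * ((μ I).toReal⁻¹ * (ν I).toReal) =
        ((μ I).toReal)⁻¹ * (β.toReal * (ν I).toReal) := by ring
    rw [hrhs, ← sub_nonneg]
    have expand : (μ I).toReal⁻¹ * (β.toReal * (ν I).toReal) - (ν E0).toReal =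
        (μ I).toReal⁻¹ * ((β.toReal * (ν I).toReal) - (μ I).toReal * (ν E0).toReal) := by
      field_simp
    rw [expand]
    exact mul_nonneg (by positivity) (by linarith)
  have hgdrge : c ≤ g dr := by
    have key := ENNReal.toReal_mono (ENNReal.mul_ne_top (measure_ne_top μ I) (hνfin E1)) hE1ge'
    rw [ENNReal.toReal_mul, ENNReal.toReal_mul] at key
    rw [hgdr, hc, hsν]
    have hrhs : β.toReal * ((μ I).toReal⁻¹ * (ν I).toReal) =
        ((μ I).toReal)⁻¹ * (β.toReal * (ν I).toReal) := by ring
    rw [hrhs, ← sub_nonneg]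
    have expand : (ν E1).toReal - (μ I).toReal⁻¹ * (β.toReal * (ν I).toReal) =
        (μ I).toReal⁻¹ * ((μ I).toReal * (ν E1).toReal - β.toReal * (ν I).toReal) := by
      field_simp
    rw [expand]
    exact mul_nonneg (by positivity) (by linarith)
  -- IVT
  obtain ⟨t, htIcc, hgt⟩ := intermediate_value_Icc (ENNReal.toReal_nonneg : (0:ℝ) ≤ dr)
    hgcont ⟨hg0le, hgdrge⟩
  refine ⟨Efam t, hEsub t, hEm t, hEμ t htIcc, ?_⟩
  rw [hI2R _ (hEm t), hgval t, hgt, hEμ t htIcc, hc, ← mul_assoc,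
    inv_mul_cancel₀ hβtR.ne', one_mul]
end

section
/- Let (X,μ) be a non-atomic probability measure space, p > 1, and φ : X → [0,∞) measurable with ∫_X φ dμ = f and |||φ|||_{p,∞} = F, where 0 < f ≤ F. Let I ⊆ X be measurable with μ(I) > 0 and set s = (1/μ(I)) ∫_I φ dμ. Define ψ : X → [0,∞) by ψ(t) = φ(t) for t ∈ X∖I and ψ(t) = s for t ∈ I. Then ∫_X ψ dμ = f and |||ψ|||_{p,∞} ≤ F. -/
open MeasureTheory Set Filter ENNReal

/-- Two-point concavity of `x ↦ x ^ q` on `ℝ≥0∞` for `0 < q ≤ 1`. -/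
lemma concave2_rpow {q : ℝ} (hq0 : 0 < q) (hq1 : q ≤ 1) (w₁ w₂ x y : ℝ≥0∞)
    (hw : w₁ + w₂ = 1) : w₁ * x ^ q + w₂ * y ^ q ≤ (w₁ * x + w₂ * y) ^ q := by
  have hp1 : (1 : ℝ) ≤ 1 / q := by
    rw [le_div_iff₀ hq0]; linarith
  have h := ENNReal.rpow_arith_mean_le_arith_mean2_rpow w₁ w₂ (x ^ q) (y ^ q) hw hp1
  have hxx : (x ^ q) ^ (1 / q) = x := by
    rw [← ENNReal.rpow_mul, mul_one_div_cancel hq0.ne', ENNReal.rpow_one]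
  have hyy : (y ^ q) ^ (1 / q) = y := by
    rw [← ENNReal.rpow_mul, mul_one_div_cancel hq0.ne', ENNReal.rpow_one]
  rw [hxx, hyy] at h
  have h2 := ENNReal.rpow_le_rpow h hq0.le
  rwa [← ENNReal.rpow_mul, one_div_mul_cancel hq0.ne', ENNReal.rpow_one] at h2

/-- Proposition 2.2: replacing `φ` on `I` by its average over `I` preserves the integral
and does not increase the norm `|||·|||_{p,∞}`. -/
theorem stmt1 {X : Type*} [MeasurableSpace X] (μ : MeasureTheory.Measure X)
    [IsProbabilityMeasure μ] (hna : Nonatomic μ)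
    (p : ℝ) (hp : 1 < p)
    (φ : X → ℝ) (hφm : Measurable φ) (hφ0 : ∀ x, 0 ≤ φ x)
    (f F : ℝ) (hf : 0 < f) (hfF : f ≤ F)
    (hint : ∫⁻ x, ENNReal.ofReal (φ x) ∂μ = ENNReal.ofReal f)
    (hnorm : tripleNorm μ p φ = ENNReal.ofReal F)
    (I : Set X) (hI : MeasurableSet I) (hIpos : 0 < μ I)
    (s : ℝ) (hs : s = ((∫⁻ x in I, ENNReal.ofReal (φ x) ∂μ) / μ I).toReal)
    (ψ : X → ℝ) (hψI : ∀ x ∈ I, ψ x = s) (hψO : ∀ x ∉ I, ψ x = φ x) :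
    (∫⁻ x, ENNReal.ofReal (ψ x) ∂μ = ENNReal.ofReal f) ∧
      tripleNorm μ p ψ ≤ ENNReal.ofReal F := by

  classical
  set q : ℝ := 1 - 1/p with hqdef
  have hq0 : 0 < q := by
    have : 1/p < 1 := by rw [div_lt_one (by linarith)]; linarith
    simp only [hqdef]; linarith
  have hq1 : q ≤ 1 := by
    have : 0 < 1/p := by positivity
    simp only [hqdef]; linarith
  have hexp : -1 + 1/p = -q := by simp [hqdef]; ring
  have habsφ : ∀ x : X, |φ x| = φ x := fun x => abs_of_nonneg (hφ0 x)
  -- bound from the triple norm of φ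
  have hB : ∀ S : Set X, MeasurableSet S →
      ∫⁻ x in S, ENNReal.ofReal (φ x) ∂μ ≤ ENNReal.ofReal F * μ S ^ q := by
    intro S hS
    by_cases hS0 : μ S = 0
    · simp [Measure.restrict_eq_zero.mpr hS0]
    · have hStop : μ S ≠ ∞ := measure_ne_top μ S
      have h1 : μ S ^ (-1 + 1/p) * ∫⁻ x in S, ENNReal.ofReal |φ x| ∂μ ≤ ENNReal.ofReal F := by
        rw [← hnorm]
        exact le_iSup_of_le S (le_iSup_of_le hS
          (le_iSup_of_le (pos_iff_ne_zero.mpr hS0) le_rfl))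
      simp only [habsφ, hexp] at h1
      calc ∫⁻ x in S, ENNReal.ofReal (φ x) ∂μ
          = (μ S ^ q * μ S ^ (-q)) * ∫⁻ x in S, ENNReal.ofReal (φ x) ∂μ := by
            rw [← ENNReal.rpow_add _ _ hS0 hStop]
            simp
        _ = μ S ^ q * (μ S ^ (-q) * ∫⁻ x in S, ENNReal.ofReal (φ x) ∂μ) := by ring
        _ ≤ μ S ^ q * ENNReal.ofReal F := mul_le_mul_right h1 _
        _ = ENNReal.ofReal F * μ S ^ q := mul_comm _ _
  set A : ℝ≥0∞ := ∫⁻ x in I, ENNReal.ofReal (φ x) ∂μ with hAdef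
  have hm0 : μ I ≠ 0 := hIpos.ne'
  have hmtop : μ I ≠ ∞ := measure_ne_top μ I
  have hAtop : A ≠ ∞ := by
    have : A ≤ ENNReal.ofReal f := by
      rw [← hint]; exact setLIntegral_le_lintegral I _
    exact (lt_of_le_of_lt this ENNReal.ofReal_lt_top).ne
  have hsval : ENNReal.ofReal s = A / μ I := by
    rw [hs]
    exact ENNReal.ofReal_toReal (by
      simp [ENNReal.div_eq_top, hAtop, hm0])
  have hsm : ENNReal.ofReal s * μ I = A := by
    rw [hsval]; exact ENNReal.div_mul_cancel hm0 hmtop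
  have hs0 : 0 ≤ s := hs ▸ ENNReal.toReal_nonneg
  have hψ0 : ∀ x, 0 ≤ ψ x := by
    intro x
    by_cases hx : x ∈ I
    · rw [hψI x hx]; exact hs0
    · rw [hψO x hx]; exact hφ0 x
  have habsψ : ∀ x : X, |ψ x| = ψ x := fun x => abs_of_nonneg (hψ0 x)
  -- splitting the integral of ψ
  have hsplit : ∀ E : Set X, MeasurableSet E →
      ∫⁻ x in E, ENNReal.ofReal (ψ x) ∂μ =
        ENNReal.ofReal s * μ (E ∩ I) + ∫⁻ x in E \ I, ENNReal.ofReal (φ x) ∂μ := by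
    intro E hE
    rw [← lintegral_inter_add_diff (fun x => ENNReal.ofReal (ψ x)) E hI]
    congr 1
    · rw [setLIntegral_congr_fun (hE.inter hI)
        ((fun x hx => by rw [hψI x hx.2] : ∀ x ∈ E ∩ I,
          ENNReal.ofReal (ψ x) = ENNReal.ofReal s)), setLIntegral_const]
    · exact setLIntegral_congr_fun (hE.diff hI)
        (fun x hx => by rw [hψO x hx.2])
  constructor
  · calc ∫⁻ x, ENNReal.ofReal (ψ x) ∂μ
        = ∫⁻ x in Set.univ, ENNReal.ofReal (ψ x) ∂μ := (setLIntegral_univ _).symm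
      _ = ENNReal.ofReal s * μ (Set.univ ∩ I) + ∫⁻ x in Set.univ \ I, ENNReal.ofReal (φ x) ∂μ :=
          hsplit Set.univ MeasurableSet.univ
      _ = ∫⁻ x in Set.univ ∩ I, ENNReal.ofReal (φ x) ∂μ
            + ∫⁻ x in Set.univ \ I, ENNReal.ofReal (φ x) ∂μ := by
          rw [Set.univ_inter, hsm, hAdef]
      _ = ∫⁻ x in Set.univ, ENNReal.ofReal (φ x) ∂μ :=
          lintegral_inter_add_diff _ _ hI
      _ = ENNReal.ofReal f := by rw [setLIntegral_univ]; exact hint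
  · refine iSup_le fun E => iSup_le fun hE => iSup_le fun hEpos => ?_
    simp only [habsψ, hexp]
    have hE0 : μ E ≠ 0 := hEpos.ne'
    have hEtop : μ E ≠ ∞ := measure_ne_top μ E
    set a : ℝ≥0∞ := μ (E \ I) with hadef
    set b : ℝ≥0∞ := μ (E ∩ I) with hbdef
    set θ : ℝ≥0∞ := b / μ I with hθdef
    have hbm : b ≤ μ I := measure_mono Set.inter_subset_right
    have hθ1 : θ ≤ 1 := by
      rw [hθdef, ENNReal.div_le_iff hm0 hmtop, one_mul]; exact hbm
    have hθm : θ * μ I = b := ENNReal.div_mul_cancel hm0 hmtop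
    have hw : (1 - θ) + θ = 1 := tsub_add_cancel_of_le hθ1
    set u : ℝ≥0∞ := ∫⁻ x in E \ I, ENNReal.ofReal (φ x) ∂μ with hudef
    have hu : u ≤ ENNReal.ofReal F * a ^ q := hB (E \ I) (hE.diff hI)
    have huA : u + A ≤ ENNReal.ofReal F * (a + μ I) ^ q := by
      have hdisj : Disjoint (E \ I) I := disjoint_sdiff_left
      have h1 : ∫⁻ x in (E \ I) ∪ I, ENNReal.ofReal (φ x) ∂μ = u + A := by
        rw [lintegral_union hI hdisj]
      have h2 : μ ((E \ I) ∪ I) = a + μ I := measure_union hdisj hI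
      have := hB ((E \ I) ∪ I) ((hE.diff hI).union hI)
      rwa [h1, h2] at this
    have hsb : ENNReal.ofReal s * b = θ * A := by
      rw [hsval, hθdef, div_eq_mul_inv, div_eq_mul_inv]; ring
    have hab : μ E = a + b := by
      rw [hadef, hbdef, add_comm]; exact (measure_inter_add_diff E hI).symm
    have hT : ∫⁻ x in E, ENNReal.ofReal (ψ x) ∂μ ≤ ENNReal.ofReal F * μ E ^ q := by
      rw [hsplit E hE, ← hudef, hsb]
      calc θ * A + u = θ * A + ((1 - θ) + θ) * u := by rw [hw, one_mul]
        _ = (1 - θ) * u + θ * (u + A) := by ring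
        _ ≤ (1 - θ) * (ENNReal.ofReal F * a ^ q) + θ * (ENNReal.ofReal F * (a + μ I) ^ q) :=
            add_le_add (mul_le_mul_right hu _) (mul_le_mul_right huA _)
        _ = ENNReal.ofReal F * ((1 - θ) * a ^ q + θ * (a + μ I) ^ q) := by ring
        _ ≤ ENNReal.ofReal F * ((1 - θ) * a + θ * (a + μ I)) ^ q :=
            mul_le_mul_right (concave2_rpow hq0 hq1 _ _ _ _ hw) _
        _ = ENNReal.ofReal F * (a + b) ^ q := by
            congr 2
            calc (1 - θ) * a + θ * (a + μ I) = ((1 - θ) + θ) * a + θ * μ I := by ring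
              _ = a + b := by rw [hw, one_mul, hθm]
        _ = ENNReal.ofReal F * μ E ^ q := by rw [hab]
    calc μ E ^ (-q) * ∫⁻ x in E, ENNReal.ofReal (ψ x) ∂μ
        ≤ μ E ^ (-q) * (ENNReal.ofReal F * μ E ^ q) := mul_le_mul_right hT _
      _ = ENNReal.ofReal F * (μ E ^ (-q) * μ E ^ q) := by ring
      _ = ENNReal.ofReal F := by
          rw [← ENNReal.rpow_add _ _ hE0 hEtop]
          simp
end

section
/- Let (X,μ) be a non-atomic probability measure space and T a tree on X. Then for every I ∈ T and every a with 0 < a < 1 there exists a subfamily F(I) ⊆ T consisting of pairwise almost disjoint subsets of I such that μ(⋃_{J∈F(I)} J) = Σ_{J∈F(I)} μ(J) = (1−a)·μ(I). -/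
open MeasureTheory Set Filter ENNReal

section MelasAux

variable {X : Type*} [MeasurableSpace X] {μ : Measure X} [IsProbabilityMeasure μ]
  {T : TreeOn X μ}

/-- Invariant for the greedy construction. -/
def GoodSt (μ : Measure X) (T : TreeOn X μ) (I : Set X) (c : ℝ) (n : ℕ)
    (p : Set X × ℝ × Finset (Set X)) : Prop :=
  p.1 ∈ T.level n ∧ p.1 ∈ T.carrier ∧ p.1 ⊆ I ∧ 0 ≤ p.2.1 ∧ p.2.1 < (μ p.1).toReal ∧
  ↑p.2.2 ⊆ T.carrier ∧ (∀ L ∈ p.2.2, L ⊆ I) ∧ (∀ L ∈ p.2.2, μ (L ∩ p.1) = 0) ∧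
  ((↑p.2.2 : Set (Set X)).Pairwise fun A B => μ (A ∩ B) = 0) ∧
  ∑ L ∈ p.2.2, (μ L).toReal = c - p.2.1

lemma child_sum {J : Set X} (hJ : J ∈ T.carrier) :
    (μ J).toReal = ∑ K ∈ (T.child_finite J hJ).toFinset, (μ K).toReal := by
  set C := (T.child_finite J hJ).toFinset with hCdef
  have hC : (↑C : Set (Set X)) = T.child J := Set.Finite.coe_toFinset _
  have h0 : ⋃ K ∈ C, K = J := by
    rw [← Finset.set_biUnion_coe, hC, ← Set.sUnion_eq_biUnion, T.child_union J hJ]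
  have h1 : μ J = ∑ K ∈ C, μ K := by
    refine (congrArg μ h0.symm).trans (measure_biUnion_finset₀ ?_ ?_)
    · intro A hA B hB hAB
      rw [Finset.mem_coe, hCdef, Set.Finite.mem_toFinset] at hA hB
      exact T.child_almost_disjoint J hJ A hA B hB hAB
    · intro K hK
      rw [hCdef, Set.Finite.mem_toFinset] at hK
      exact (T.meas K (T.child_subset_carrier J hJ hK)).nullMeasurableSet
  rw [h1, ENNReal.toReal_sum (fun K _ => measure_ne_top μ K)]

private lemma sum_prefix {α : Type*} (f : α → ℝ) (s : Finset α) :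
    ∀ t : ℝ, 0 ≤ t → t < ∑ x ∈ s, f x →
    ∃ S ⊆ s, ∃ K ∈ s, K ∉ S ∧ ∑ x ∈ S, f x ≤ t ∧ t < ∑ x ∈ S, f x + f K := by
  classical
  induction s using Finset.induction_on with
  | empty => intro t ht h; simp at h; linarith
  | @insert K s hKs ih =>
    intro t ht h
    by_cases h1 : t < f K
    · exact ⟨∅, Finset.empty_subset _, K, Finset.mem_insert_self _ _, Finset.notMem_empty _,
        by simpa using ht, by simpa using h1⟩
    · push_neg at h1
      rw [Finset.sum_insert hKs] at h
      obtain ⟨S, hSs, K', hK's, hK'S, hle, hlt⟩ := ih (t - f K) (by linarith) (by linarith)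
      have hKS : K ∉ S := fun hh => hKs (hSs hh)
      refine ⟨insert K S, Finset.insert_subset_insert _ hSs, K',
        Finset.mem_insert_of_mem hK's, ?_, ?_, ?_⟩
      · intro hh
        rcases Finset.mem_insert.1 hh with rfl | hh
        · exact hKs hK's
        · exact hK'S hh
      · rw [Finset.sum_insert hKS]; linarith
      · rw [Finset.sum_insert hKS]; linarith

lemma good_step {I : Set X} {c : ℝ} {n : ℕ} {p : Set X × ℝ × Finset (Set X)}
    (hp : GoodSt μ T I c n p) :
    ∃ q : Set X × ℝ × Finset (Set X),
      GoodSt μ T I c (n + 1) q ∧ p.2.2 ⊆ q.2.2 ∧ q.2.1 ≤ p.2.1 := by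
  classical
  obtain ⟨J, t, F⟩ := p
  obtain ⟨hlev, hJc, hJI, ht0, htJ, hFc, hFI, hFJ, hFpw, hFsum⟩ := hp
  dsimp only at hlev hJc hJI ht0 htJ hFc hFI hFJ hFpw hFsum
  set C := (T.child_finite J hJc).toFinset with hCdef
  have hmemC : ∀ {K : Set X}, K ∈ C ↔ K ∈ T.child J := by
    intro K; rw [hCdef, Set.Finite.mem_toFinset]
  have hsum := child_sum (T := T) hJc
  rw [← hCdef] at hsum
  obtain ⟨S, hSC, K, hKC, hKS, hle, hlt⟩ :=
    sum_prefix (fun L => (μ L).toReal) C t ht0 (hsum ▸ htJ)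
  have hKch : K ∈ T.child J := hmemC.1 hKC
  have hSch : ∀ L ∈ S, L ∈ T.child J := fun L hL => hmemC.1 (hSC hL)
  have hKc : K ∈ T.carrier := T.child_subset_carrier J hJc hKch
  have hKJ : K ⊆ J := T.child_sub J hJc K hKch
  -- sets in S are in the carrier, subsets of J, with positive measure
  have hScar : ∀ L ∈ S, L ∈ T.carrier := fun L hL => T.child_subset_carrier J hJc (hSch L hL)
  have hSJ : ∀ L ∈ S, L ⊆ J := fun L hL => T.child_sub J hJc L (hSch L hL)
  -- F and S are disjoint
  have hFS : Disjoint F S := by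
    rw [Finset.disjoint_left]
    intro L hLF hLS
    have h1 : μ (L ∩ J) = 0 := hFJ L hLF
    rw [Set.inter_eq_self_of_subset_left (hSJ L hLS)] at h1
    exact absurd h1 (T.pos L (hScar L hLS)).ne'
  have hSnn : 0 ≤ ∑ L ∈ S, (μ L).toReal := Finset.sum_nonneg fun _ _ => ENNReal.toReal_nonneg
  refine ⟨(K, t - ∑ L ∈ S, (μ L).toReal, F ∪ S), ⟨?_, hKc, hKJ.trans hJI, by dsimp only; linarith,
    by dsimp only; linarith, ?_, ?_, ?_, ?_, ?_⟩, Finset.subset_union_left, by dsimp only; linarith⟩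
  · rw [T.level_succ n]
    exact Set.mem_biUnion hlev hKch
  · intro L hL
    rcases Finset.mem_coe.1 hL |> Finset.mem_union.1 with h | h
    · exact hFc h
    · exact hScar L h
  · intro L hL
    rcases Finset.mem_union.1 hL with h | h
    · exact hFI L h
    · exact (hSJ L h).trans hJI
  · intro L hL
    rcases Finset.mem_union.1 hL with h | h
    · exact measure_mono_null (Set.inter_subset_inter_right L hKJ) (hFJ L h)
    · refine T.child_almost_disjoint J hJc L (hSch L h) K hKch ?_
      rintro rfl; exact hKS h
  · intro A hA B hB hAB
    simp only [Finset.coe_union, Set.mem_union, Finset.mem_coe] at hA hB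
    rcases hA with hA | hA <;> rcases hB with hB | hB
    · exact hFpw hA hB hAB
    · exact measure_mono_null (Set.inter_subset_inter_right A (hSJ B hB)) (hFJ A hA)
    · rw [Set.inter_comm]
      exact measure_mono_null (Set.inter_subset_inter_right B (hSJ A hA)) (hFJ B hB)
    · exact T.child_almost_disjoint J hJc A (hSch A hA) B (hSch B hB) hAB
  · dsimp only
    rw [Finset.sum_union hFS, hFsum]
    ring

lemma good_seq {I : Set X} {c : ℝ} {n0 : ℕ} {p0 : Set X × ℝ × Finset (Set X)}
    (h0 : GoodSt μ T I c n0 p0) :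
    ∃ g : ℕ → Set X × ℝ × Finset (Set X), g 0 = p0 ∧
      (∀ k, GoodSt μ T I c (n0 + k) (g k)) ∧
      (∀ k, (g k).2.2 ⊆ (g (k + 1)).2.2) ∧ (∀ k, (g (k + 1)).2.1 ≤ (g k).2.1) := by
  have H : ∀ (n : ℕ) (p : Set X × ℝ × Finset (Set X)), GoodSt μ T I c n p →
      ∃ q, GoodSt μ T I c (n + 1) q ∧ p.2.2 ⊆ q.2.2 ∧ q.2.1 ≤ p.2.1 :=
    fun _ _ hp => good_step hp
  choose next h1 h2 h3 using H
  let f : ∀ _ : ℕ, {p // GoodSt μ T I c (n0 + _) p} := fun k =>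
    Nat.rec (motive := fun k => {p // GoodSt μ T I c (n0 + k) p}) ⟨p0, h0⟩
      (fun k ih => ⟨next (n0 + k) ih.1 ih.2, h1 _ _ ih.2⟩) k
  exact ⟨fun k => (f k).1, rfl, fun k => (f k).2, fun k => h2 _ _ (f k).2,
    fun k => h3 _ _ (f k).2⟩


end MelasAux

/-- Lemma 2.3: for every `I ∈ T` and `0 < a < 1` there is a subfamily of `T` of pairwise
almost disjoint subsets of `I` whose union has measure `(1-a)·μ I`. -/
theorem stmt2 {X : Type*} [MeasurableSpace X] (μ : MeasureTheory.Measure X)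
    [IsProbabilityMeasure μ] (hna : Nonatomic μ) (T : TreeOn X μ)
    (I : Set X) (hI : I ∈ T.carrier) (a : ℝ) (ha0 : 0 < a) (ha1 : a < 1) :
    ∃ F : Set (Set X), F ⊆ T.carrier ∧ F.Countable ∧ (∀ J ∈ F, J ⊆ I) ∧
      (∀ J ∈ F, ∀ K ∈ F, J ≠ K → μ (J ∩ K) = 0) ∧
      μ (⋃₀ F) = ∑' J : F, μ (J : Set X) ∧
      ∑' J : F, μ (J : Set X) = ENNReal.ofReal (1 - a) * μ I := by
  classical
  obtain ⟨m0, hm0⟩ : ∃ m, I ∈ T.level m := by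
    have h := hI; rw [T.carrier_eq] at h; exact Set.mem_iUnion.1 h
  have hμI0 : (0 : ℝ) < (μ I).toReal :=
    ENNReal.toReal_pos (T.pos I hI).ne' (measure_ne_top μ I)
  set c := (1 - a) * (μ I).toReal with hc
  have hc0 : 0 ≤ c := mul_nonneg (by linarith) hμI0.le
  have hcI : c < (μ I).toReal := by nlinarith
  have h0 : GoodSt μ T I c m0 (I, c, (∅ : Finset (Set X))) :=
    ⟨hm0, hI, subset_rfl, hc0, hcI, by simp, by simp, by simp, by simp, by simp⟩
  obtain ⟨g, hg0, hgood, hFsub, htmono⟩ := good_seq h0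
  set JJ := fun k => (g k).1 with hJJ
  set tt := fun k => (g k).2.1 with htt'
  set FF := fun k => (g k).2.2 with hFF
  have hmono : Monotone FF := monotone_nat_of_le_succ fun k => by
    exact_mod_cast hFsub k
  have hanti : Antitone tt := antitone_nat_of_succ_le htmono
  have htt0 : ∀ k, 0 ≤ tt k := fun k => (hgood k).2.2.2.1
  have httJ : ∀ k, tt k < (μ (JJ k)).toReal := fun k => (hgood k).2.2.2.2.1
  have hFcar : ∀ k, ↑(FF k) ⊆ T.carrier := fun k => (hgood k).2.2.2.2.2.1
  have hFI : ∀ k, ∀ L ∈ FF k, L ⊆ I := fun k => (hgood k).2.2.2.2.2.2.1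
  have hFpw : ∀ k, ((↑(FF k) : Set (Set X)).Pairwise fun A B => μ (A ∩ B) = 0) :=
    fun k => (hgood k).2.2.2.2.2.2.2.2.1
  have hsum : ∀ k, ∑ L ∈ FF k, (μ L).toReal = c - tt k :=
    fun k => (hgood k).2.2.2.2.2.2.2.2.2
  -- the remainders tend to zero
  have hB : Tendsto (fun k => ⨆ J ∈ T.level (k + m0), μ J) atTop (nhds 0) :=
    T.level_tendsto.comp (tendsto_add_atTop_nat m0)
  have hBne : ∀ k : ℕ, (⨆ J ∈ T.level (k + m0), μ J) ≠ ∞ := fun k =>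
    (lt_of_le_of_lt (iSup₂_le fun J _ => prob_le_one) one_lt_top).ne
  have hJle : ∀ k, μ (JJ k) ≤ ⨆ J ∈ T.level (k + m0), μ J := fun k =>
    le_biSup μ (by rw [add_comm]; exact (hgood k).1)
  have hbt : Tendsto (fun k => (⨆ J ∈ T.level (k + m0), μ J).toReal) atTop (nhds 0) := by
    have h2 := (ENNReal.tendsto_toReal (a := 0) (by simp)).comp hB
    simpa [Function.comp_def] using h2
  have httlim : Tendsto tt atTop (nhds 0) := by
    refine squeeze_zero htt0 (fun k => ?_) hbt
    exact le_trans (httJ k).le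
      ((ENNReal.toReal_le_toReal (measure_ne_top μ _) (hBne k)).2 (hJle k))
  -- the family
  set Fs : Set (Set X) := ⋃ k, ↑(FF k) with hFs
  have hFsc : Fs.Countable := Set.countable_iUnion fun k => (FF k).countable_toSet
  have hFspw : ∀ A ∈ Fs, ∀ B ∈ Fs, A ≠ B → μ (A ∩ B) = 0 := by
    intro A hA B hB hAB
    obtain ⟨kA, hkA⟩ := Set.mem_iUnion.1 hA
    obtain ⟨kB, hkB⟩ := Set.mem_iUnion.1 hB
    have hA' : A ∈ FF (max kA kB) := hmono (le_max_left _ _) hkA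
    have hB' : B ∈ FF (max kA kB) := hmono (le_max_right _ _) hkB
    exact hFpw (max kA kB) hA' hB' hAB
  have hFscar : Fs ⊆ T.carrier := Set.iUnion_subset fun k => hFcar k
  haveI := hFsc.to_subtype
  have key : ∀ k, (∑ L ∈ FF k, μ L) = ENNReal.ofReal (c - tt k) := by
    intro k
    have h1 : (∑ L ∈ FF k, μ L) ≠ ∞ := by
      refine (ENNReal.sum_lt_top.2 fun L _ => ?_).ne
      exact (measure_ne_top μ L).lt_top
    rw [← ENNReal.ofReal_toReal h1, ENNReal.toReal_sum (fun L _ => measure_ne_top μ L), hsum k]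
  have hcover : ∀ t : Finset ↥Fs, ∃ k, t ⊆ (FF k).subtype (· ∈ Fs) := by
    intro t
    have hx : ∀ x : ↥Fs, ∃ k, (x : Set X) ∈ FF k := fun x => by
      simpa using Set.mem_iUnion.1 x.2
    choose idx hidx using hx
    refine ⟨t.sup idx, fun x hx' => Finset.mem_subtype.2 (hmono (Finset.le_sup hx') (hidx x))⟩
  have htsum : ∑' (J : ↥Fs), μ (J : Set X)
      = ⨆ k, ∑ x ∈ (FF k).subtype (· ∈ Fs), μ (x : Set X) :=
    ENNReal.tsum_eq_iSup_sum' _ hcover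
  have hsub : ∀ k, ∑ x ∈ (FF k).subtype (· ∈ Fs), μ (x : Set X) = ∑ L ∈ FF k, μ L :=
    fun k => Finset.sum_subtype_of_mem _ (fun L hL => Set.mem_iUnion.2 ⟨k, hL⟩)
  have hm2 : Monotone fun k => ENNReal.ofReal (c - tt k) := fun i j hij =>
    ENNReal.ofReal_le_ofReal (by linarith [hanti hij])
  have hlim : Tendsto (fun k => ENNReal.ofReal (c - tt k)) atTop (nhds (ENNReal.ofReal c)) := by
    refine (ENNReal.continuous_ofReal.tendsto _).comp ?_
    simpa using tendsto_const_nhds.sub httlim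
  have hiSup : (⨆ k, ENNReal.ofReal (c - tt k)) = ENNReal.ofReal c :=
    tendsto_nhds_unique (tendsto_atTop_iSup hm2) hlim
  have htsum2 : ∑' (J : ↥Fs), μ (J : Set X) = ENNReal.ofReal (1 - a) * μ I := by
    rw [htsum]
    simp_rw [hsub, key]
    rw [hiSup, hc, ENNReal.ofReal_mul (by linarith), ENNReal.ofReal_toReal (measure_ne_top μ I)]
  refine ⟨Fs, hFscar, hFsc, ?_, hFspw, ?_, htsum2⟩
  · intro J hJ
    obtain ⟨k, hk⟩ := Set.mem_iUnion.1 hJ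
    exact hFI k J hk
  · rw [Set.sUnion_eq_iUnion]
    refine measure_iUnion₀ ?_ ?_
    · intro j k hjk
      exact hFspw _ j.2 _ k.2 fun h => hjk (Subtype.ext h)
    · exact fun j => (T.meas _ (hFscar j.2)).nullMeasurableSet
end

section
/- Let (X,μ) be a non-atomic probability measure space, T a tree on X, M_T the associated maximal operator, and p > 1. Then for every f, F with 0 < f ≤ F, sup{ ||M_T φ||_{p,∞} : φ ≥ 0 measurable, ∫_X φ dμ = f, |||φ|||_{p,∞} = F } = F. -/
open MeasureTheory Set Filter ENNReal

section Sierpinski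

variable {X : Type*} [MeasurableSpace X] {μ : Measure X}

lemma nonatomic_halving (hna : Nonatomic μ) [IsFiniteMeasure μ] (n : ℕ) :
    ∀ A : Set X, MeasurableSet A → 0 < μ A →
      ∃ B, B ⊆ A ∧ MeasurableSet B ∧ 0 < μ B ∧ μ B ≤ μ A * 2⁻¹ ^ n := by
  induction n with
  | zero => exact fun A hA hpos => ⟨A, subset_rfl, hA, hpos, by simp⟩
  | succ n ih =>
    intro A hA hpos
    obtain ⟨B, hBA, hB, hBpos, hBle⟩ := ih A hA hpos
    obtain ⟨C, hCB, hC, hCpos, hClt⟩ := hna B hB hBpos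
    have hdiff : μ (B \ C) = μ B - μ C :=
      measure_diff hCB hC.nullMeasurableSet (measure_ne_top μ C)
    have hdpos : 0 < μ (B \ C) := by
      rw [hdiff]; exact tsub_pos_iff_lt.mpr hClt
    have hkey : μ C ≤ μ B / 2 ∨ μ (B \ C) ≤ μ B / 2 := by
      by_contra h
      push_neg at h
      have h1 : μ B < μ C + μ (B \ C) := by
        calc μ B = μ B / 2 + μ B / 2 := (ENNReal.add_halves _).symm
        _ < μ C + μ (B \ C) := ENNReal.add_lt_add h.1 h.2
      have h2 : μ C + μ (B \ C) ≤ μ B := by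
        rw [hdiff]
        rw [add_tsub_cancel_of_le hClt.le]
      exact absurd (h1.trans_le h2) (lt_irrefl _)
    have hhalf : μ B / 2 ≤ μ A * 2⁻¹ ^ (n + 1) := by
      rw [pow_succ, ← mul_assoc]
      rw [ENNReal.div_eq_inv_mul, mul_comm]
      exact mul_le_mul_left hBle 2⁻¹
    rcases hkey with hk | hk
    · exact ⟨C, hCB.trans hBA, hC, hCpos, hk.trans hhalf⟩
    · exact ⟨B \ C, (diff_subset.trans hBA), hB.diff hC, hdpos, hk.trans hhalf⟩

lemma nonatomic_exists_small (hna : Nonatomic μ) [IsFiniteMeasure μ] {A : Set X}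
    (hA : MeasurableSet A) (hpos : 0 < μ A) {ε : ℝ≥0∞} (hε : ε ≠ 0) :
    ∃ B, B ⊆ A ∧ MeasurableSet B ∧ 0 < μ B ∧ μ B ≤ ε := by
  have htend : Tendsto (fun n : ℕ => μ A * 2⁻¹ ^ n) atTop (nhds 0) := by
    have h2 : Tendsto (fun n : ℕ => (2⁻¹ : ℝ≥0∞) ^ n) atTop (nhds 0) :=
      ENNReal.tendsto_pow_atTop_nhds_zero_of_lt_one (by norm_num)
    have := ENNReal.Tendsto.const_mul h2 (Or.inr (measure_ne_top μ A))
    simpa using this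
  obtain ⟨n, hn⟩ := (htend.eventually_lt_const (zero_lt_iff.mpr hε)).exists
  obtain ⟨B, h1, h2, h3, h4⟩ := nonatomic_halving hna n A hA hpos
  exact ⟨B, h1, h2, h3, h4.trans hn.le⟩

theorem nonatomic_exists_subset_measure_eq (hna : Nonatomic μ) [IsFiniteMeasure μ]
    {s : Set X} (hs : MeasurableSet s) {r : ℝ≥0∞} (hr : r ≤ μ s) :
    ∃ t, t ⊆ s ∧ MeasurableSet t ∧ μ t = r := by
  rcases eq_or_ne r 0 with rfl | hr0
  · exact ⟨∅, empty_subset s, MeasurableSet.empty, measure_empty⟩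
  have hrt : r ≠ ⊤ := (hr.trans_lt (measure_lt_top μ s)).ne
  -- the greedy step
  have step : ∀ t : Set X, t ⊆ s → MeasurableSet t → μ t < r →
      ∃ B, B ⊆ s \ t ∧ MeasurableSet B ∧ 0 < μ B ∧ μ t + μ B ≤ r ∧
        ∀ B', B' ⊆ s \ t → MeasurableSet B' → μ B' ≤ r - μ t → μ B' ≤ 2 * μ B := by
    intro t hts htm htr
    have hd : 0 < r - μ t := tsub_pos_iff_lt.mpr htr
    have hst : μ (s \ t) = μ s - μ t := measure_diff hts htm.nullMeasurableSet (measure_ne_top μ t)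
    have hstpos : 0 < μ (s \ t) := by
      rw [hst]; exact hd.trans_le (tsub_le_tsub_right hr _)
    set 𝒞 : Set ℝ≥0∞ := {m | ∃ B', B' ⊆ s \ t ∧ MeasurableSet B' ∧ μ B' ≤ r - μ t ∧ m = μ B'}
      with h𝒞
    obtain ⟨B₀, hB₀s, hB₀m, hB₀pos, hB₀le⟩ :=
      nonatomic_exists_small hna (hs.diff htm) hstpos hd.ne'
    set c := sSup 𝒞 with hc
    have hc0 : c ≠ 0 := by
      have : μ B₀ ∈ 𝒞 := ⟨B₀, hB₀s, hB₀m, hB₀le, rfl⟩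
      exact fun h => absurd ((le_sSup this).trans_eq h) (by simpa using hB₀pos.ne')
    have hcle : c ≤ r - μ t := sSup_le (fun m hm => by obtain ⟨B', _, _, h, rfl⟩ := hm; exact h)
    have hct : c ≠ ⊤ := (hcle.trans_lt (lt_of_le_of_lt tsub_le_self hrt.lt_top)).ne
    have hhalf : c / 2 < c := ENNReal.half_lt_self hc0 hct
    obtain ⟨m, hm, hcm⟩ := lt_sSup_iff.mp hhalf
    obtain ⟨B, hBs, hBm, hBle, rfl⟩ := hm
    refine ⟨B, hBs, hBm, ?_, ?_, ?_⟩
    · exact zero_lt_iff.mpr (fun h => by simp [h] at hcm)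
    · calc μ t + μ B ≤ μ t + (r - μ t) := add_le_add_right hBle _
      _ = r := add_tsub_cancel_of_le htr.le
    · intro B' h1 h2 h3
      have : μ B' ≤ c := le_sSup ⟨B', h1, h2, h3, rfl⟩
      calc μ B' ≤ c := this
      _ = c / 2 * 2 := (ENNReal.div_mul_cancel (by norm_num) (by norm_num)).symm
      _ ≤ μ B * 2 := mul_le_mul_left hcm.le 2
      _ = 2 * μ B := mul_comm _ _
  classical
  -- the greedy iteration
  let nxt : Set X → Set X := fun t =>
    if h : t ⊆ s ∧ MeasurableSet t ∧ μ t < r then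
      t ∪ Classical.choose (step t h.1 h.2.1 h.2.2)
    else t
  let seq : ℕ → Set X := fun n => nxt^[n] ∅
  have hseq_succ : ∀ n, seq (n + 1) = nxt (seq n) := by
    intro n
    exact Function.iterate_succ_apply' nxt n ∅
  have hinv : ∀ n, seq n ⊆ s ∧ MeasurableSet (seq n) ∧ μ (seq n) ≤ r := by
    intro n
    induction n with
    | zero =>
      refine ⟨empty_subset s, MeasurableSet.empty, ?_⟩
      show μ ∅ ≤ r
      simp
    | succ n ih =>
      rw [hseq_succ]
      by_cases h : seq n ⊆ s ∧ MeasurableSet (seq n) ∧ μ (seq n) < r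
      · have hspec := Classical.choose_spec (step (seq n) h.1 h.2.1 h.2.2)
        set B := Classical.choose (step (seq n) h.1 h.2.1 h.2.2)
        obtain ⟨hB1, hB2, hB3, hB4, hB5⟩ := hspec
        have heq : nxt (seq n) = seq n ∪ B := dif_pos h
        rw [heq]
        refine ⟨union_subset h.1 (hB1.trans diff_subset), h.2.1.union hB2, ?_⟩
        calc μ (seq n ∪ B) ≤ μ (seq n) + μ B := measure_union_le _ _
        _ ≤ r := hB4
      · have heq : nxt (seq n) = seq n := dif_neg h
        rw [heq]; exact ih
  have hmono : Monotone seq := by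
    apply monotone_nat_of_le_succ
    intro n
    rw [hseq_succ]
    by_cases h : seq n ⊆ s ∧ MeasurableSet (seq n) ∧ μ (seq n) < r
    · rw [show nxt (seq n) = seq n ∪ _ from dif_pos h]; exact subset_union_left
    · rw [show nxt (seq n) = seq n from dif_neg h]
  set tinf := ⋃ n, seq n with htinf
  have htinfs : tinf ⊆ s := iUnion_subset (fun n => (hinv n).1)
  have htinfm : MeasurableSet tinf := MeasurableSet.iUnion (fun n => (hinv n).2.1)
  have htinfle : μ tinf ≤ r := by
    rw [htinf, (hmono.directed_le).measure_iUnion]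
    exact iSup_le (fun n => (hinv n).2.2)
  refine ⟨tinf, htinfs, htinfm, ?_⟩
  by_contra hne
  have hlt : μ tinf < r := lt_of_le_of_ne htinfle hne
  have hd : 0 < r - μ tinf := tsub_pos_iff_lt.mpr hlt
  have hstpos : 0 < μ (s \ tinf) := by
    rw [measure_diff htinfs htinfm.nullMeasurableSet (measure_ne_top μ _)]
    exact hd.trans_le (tsub_le_tsub_right hr _)
  obtain ⟨Bstar, hBstars, hBstarm, hBstarpos, hBstarle⟩ :=
    nonatomic_exists_small hna (hs.diff htinfm) hstpos hd.ne'
  -- each step adds at least μ Bstar / 2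
  have hgrow : ∀ n, μ (seq n) + μ Bstar / 2 ≤ μ (seq (n + 1)) := by
    intro n
    have hcond : seq n ⊆ s ∧ MeasurableSet (seq n) ∧ μ (seq n) < r :=
      ⟨(hinv n).1, (hinv n).2.1, lt_of_le_of_lt (measure_mono (subset_iUnion seq n)) hlt⟩
    have hspec := Classical.choose_spec (step (seq n) hcond.1 hcond.2.1 hcond.2.2)
    set B := Classical.choose (step (seq n) hcond.1 hcond.2.1 hcond.2.2)
    obtain ⟨hB1, hB2, hB3, hB4, hB5⟩ := hspec
    have hBB : μ Bstar ≤ 2 * μ B := by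
      apply hB5 Bstar _ hBstarm
      · calc μ Bstar ≤ r - μ tinf := hBstarle
        _ ≤ r - μ (seq n) := tsub_le_tsub_left (measure_mono (subset_iUnion seq n)) r
      · exact hBstars.trans (diff_subset_diff_right (subset_iUnion seq n))
    have hB2' : μ Bstar / 2 ≤ μ B := by
      rw [ENNReal.div_le_iff (by norm_num) (by norm_num)]
      rw [mul_comm]; exact hBB
    have hdisj : Disjoint (seq n) B := by
      rw [Set.disjoint_right]
      intro x hx
      exact (hB1 hx).2
    have heq : seq (n + 1) = seq n ∪ B := by rw [hseq_succ]; exact dif_pos hcond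
    rw [heq, measure_union hdisj hB2]
    exact add_le_add_right hB2' _
  have hlin : ∀ n : ℕ, (n : ℝ≥0∞) * (μ Bstar / 2) ≤ μ (seq n) := by
    intro n
    induction n with
    | zero => simp
    | succ n ih =>
      push_cast
      rw [add_mul, one_mul]
      calc (n : ℝ≥0∞) * (μ Bstar / 2) + μ Bstar / 2 ≤ μ (seq n) + μ Bstar / 2 :=
        add_le_add_left ih _
      _ ≤ μ (seq (n + 1)) := hgrow n
  have hhalfpos : μ Bstar / 2 ≠ 0 := by
    simp only [ne_eq, ENNReal.div_eq_zero_iff]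
    push_neg
    exact ⟨hBstarpos.ne', by norm_num⟩
  obtain ⟨n, hn⟩ := ENNReal.exists_nat_mul_gt hhalfpos hrt
  exact absurd ((hlin n).trans (hinv n).2.2) (not_le.mpr hn)

end Sierpinski

section Tree

variable {X : Type*} [MeasurableSpace X] {μ : Measure X} (T : TreeOn X μ)

lemma TreeOn.level_subset_carrier : ∀ m, T.level m ⊆ T.carrier := by
  intro m
  induction m with
  | zero =>
    rw [T.level_zero]
    intro I hI
    rw [mem_singleton_iff] at hI
    exact hI ▸ T.univ_mem
  | succ m ih =>
    rw [T.level_succ m]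
    exact iUnion₂_subset (fun I hI => T.child_subset_carrier I (ih hI))

lemma TreeOn.level_finite : ∀ m, (T.level m).Finite := by
  intro m
  induction m with
  | zero => rw [T.level_zero]; exact finite_singleton _
  | succ m ih =>
    rw [T.level_succ m]
    exact Set.Finite.biUnion ih (fun I hI => T.child_finite I (T.level_subset_carrier m hI))

lemma TreeOn.sUnion_level : ∀ m, ⋃₀ T.level m = univ := by
  intro m
  induction m with
  | zero => rw [T.level_zero]; simp
  | succ m ih =>
    rw [T.level_succ m]
    ext x
    simp only [mem_sUnion, mem_iUnion, mem_univ, iff_true]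
    have hx : x ∈ ⋃₀ T.level m := by rw [ih]; trivial
    obtain ⟨I, hI, hxI⟩ := hx
    have : x ∈ ⋃₀ T.child I := by
      rw [T.child_union I (T.level_subset_carrier m hI)]; exact hxI
    obtain ⟨J, hJ, hxJ⟩ := this
    exact ⟨J, ⟨I, hI, hJ⟩, hxJ⟩

lemma TreeOn.mem_level_succ {J : Set X} {m : ℕ} :
    J ∈ T.level (m + 1) ↔ ∃ I ∈ T.level m, J ∈ T.child I := by
  rw [T.level_succ m]; simp

lemma TreeOn.level_aedisjoint : ∀ m, ∀ I ∈ T.level m, ∀ J ∈ T.level m,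
    I ≠ J → μ (I ∩ J) = 0 := by
  intro m
  induction m with
  | zero =>
    intro I hI J hJ hne
    rw [T.level_zero, mem_singleton_iff] at hI hJ
    exact absurd (hI.trans hJ.symm) hne
  | succ m ih =>
    intro I hI J hJ hne
    obtain ⟨I₀, hI₀, hIc⟩ := (T.mem_level_succ).mp hI
    obtain ⟨J₀, hJ₀, hJc⟩ := (T.mem_level_succ).mp hJ
    rcases eq_or_ne I₀ J₀ with rfl | hne₀
    · exact T.child_almost_disjoint I₀ (T.level_subset_carrier m hI₀) I hIc J hJc hne
    · have h1 : I ⊆ I₀ := T.child_sub I₀ (T.level_subset_carrier m hI₀) I hIc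
      have h2 : J ⊆ J₀ := T.child_sub J₀ (T.level_subset_carrier m hJ₀) J hJc
      have : μ (I ∩ J) ≤ μ (I₀ ∩ J₀) := measure_mono (inter_subset_inter h1 h2)
      exact le_antisymm (this.trans_eq (ih I₀ hI₀ J₀ hJ₀ hne₀)) zero_le

lemma TreeOn.exists_ancestor : ∀ (k m : ℕ), ∀ J ∈ T.level (m + k), ∃ I ∈ T.level m, J ⊆ I := by
  intro k
  induction k with
  | zero => exact fun m J hJ => ⟨J, hJ, subset_rfl⟩
  | succ k ih =>
    intro m J hJ
    obtain ⟨I₁, hI₁, hJc⟩ := (T.mem_level_succ).mp hJ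
    obtain ⟨I, hI, hsub⟩ := ih m I₁ hI₁
    exact ⟨I, hI, (T.child_sub I₁ (T.level_subset_carrier _ hI₁) J hJc).trans hsub⟩

lemma TreeOn.struct {m n : ℕ} (hmn : m ≤ n) {I J : Set X} (hI : I ∈ T.level m)
    (hJ : J ∈ T.level n) : J ⊆ I ∨ μ (I ∩ J) = 0 := by
  obtain ⟨k, rfl⟩ := Nat.exists_eq_add_of_le hmn
  obtain ⟨K, hK, hJK⟩ := T.exists_ancestor k m J hJ
  rcases eq_or_ne K I with rfl | hne
  · exact Or.inl hJK
  · refine Or.inr (le_antisymm ?_ zero_le)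
    calc μ (I ∩ J) ≤ μ (I ∩ K) := measure_mono (inter_subset_inter subset_rfl hJK)
    _ = 0 := T.level_aedisjoint m I hI K hK (Ne.symm hne)

lemma TreeOn.carrier_countable : T.carrier.Countable := by
  rw [T.carrier_eq]
  exact countable_iUnion (fun m => (T.level_finite m).countable)

lemma TreeOn.mem_level_of_mem_carrier {I : Set X} (hI : I ∈ T.carrier) :
    ∃ m, I ∈ T.level m := by
  rw [T.carrier_eq] at hI
  exact mem_iUnion.mp hI

lemma TreeOn.level_lt_of_ssubset {I J : Set X} (hI : I ∈ T.carrier)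
    {m n : ℕ} (hIm : I ∈ T.level m) (hJn : J ∈ T.level n)
    (hIJ : I ⊆ J) (hne : I ≠ J) : n < m := by
  by_contra h
  push_neg at h
  rcases T.struct h hIm hJn with hsub | hnull
  · exact hne (subset_antisymm hIJ hsub)
  · rw [inter_eq_self_of_subset_left hIJ] at hnull
    exact absurd hnull (T.pos I hI).ne'

lemma TreeOn.exists_maximal (𝓘 : Set (Set X)) (h𝓘 : 𝓘 ⊆ T.carrier) :
    ∀ I ∈ 𝓘, ∃ K ∈ 𝓘, I ⊆ K ∧ ∀ J ∈ 𝓘, K ⊆ J → K = J := by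
  have main : ∀ N : ℕ, ∀ I ∈ 𝓘, ∀ m, I ∈ T.level m → m ≤ N →
      ∃ K ∈ 𝓘, I ⊆ K ∧ ∀ J ∈ 𝓘, K ⊆ J → K = J := by
    intro N
    induction N with
    | zero =>
      intro I hI m hIm hm
      refine ⟨I, hI, subset_rfl, ?_⟩
      intro J hJ hIJ
      by_contra hne
      obtain ⟨n, hJn⟩ := T.mem_level_of_mem_carrier (h𝓘 hJ)
      have := T.level_lt_of_ssubset (h𝓘 hI) hIm hJn hIJ hne
      omega
    | succ N ih =>
      intro I hI m hIm hm
      by_cases hmax : ∀ J ∈ 𝓘, I ⊆ J → I = J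
      · exact ⟨I, hI, subset_rfl, hmax⟩
      · push_neg at hmax
        obtain ⟨J, hJ, hIJ, hne⟩ := hmax
        obtain ⟨n, hJn⟩ := T.mem_level_of_mem_carrier (h𝓘 hJ)
        have hlt := T.level_lt_of_ssubset (h𝓘 hI) hIm hJn hIJ hne
        obtain ⟨K, hK, hJK, hKmax⟩ := ih J hJ n hJn (by omega)
        exact ⟨K, hK, hIJ.trans hJK, hKmax⟩
  intro I hI
  obtain ⟨m, hm⟩ := T.mem_level_of_mem_carrier (h𝓘 hI)
  exact main m I hI m hm le_rfl

end Tree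

lemma ennreal_rpow_anti {x y : ℝ≥0∞} {e : ℝ} (he : e ≤ 0) (h : x ≤ y) : y ^ e ≤ x ^ e := by
  rw [← neg_neg e, ENNReal.rpow_neg y, ENNReal.rpow_neg x]
  exact ENNReal.inv_le_inv.mpr (ENNReal.rpow_le_rpow h (by linarith))

theorem weakNormE_maxT_le {X : Type*} [MeasurableSpace X] (μ : Measure X)
    [IsProbabilityMeasure μ] (T : TreeOn X μ) (p : ℝ) (hp : 1 < p) (φ : X → ℝ) :
    weakNormE μ p (maxT μ T φ) ≤ tripleNorm μ p φ := by
  have hp0 : (0:ℝ) < 1/p := by positivity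
  rw [weakNormE]
  refine iSup_le fun l => iSup_le fun hl => ?_
  set g : X → ℝ≥0∞ := fun x => ENNReal.ofReal |φ x| with hg
  set 𝓘 : Set (Set X) :=
    {I | I ∈ T.carrier ∧ ENNReal.ofReal l * μ I < ∫⁻ x in I, g x ∂μ} with h𝓘
  have h𝓘c : 𝓘 ⊆ T.carrier := fun I hI => hI.1
  set S : Set (Set X) := {I ∈ 𝓘 | ∀ J ∈ 𝓘, I ⊆ J → I = J} with hS
  have hSsub : S ⊆ 𝓘 := fun I hI => hI.1
  have hSc : S.Countable := T.carrier_countable.mono (fun I hI => h𝓘c (hSsub hI))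
  have hSm : ∀ I ∈ S, MeasurableSet I := fun I hI => T.meas I (h𝓘c (hSsub hI))
  set U : Set X := ⋃₀ S with hU
  have hUm : MeasurableSet U := MeasurableSet.sUnion hSc hSm
  have hUfin : μ U ≠ ⊤ := measure_ne_top μ U
  -- the level set is covered by U
  have hcover : {x | ENNReal.ofReal l < maxT μ T φ x} ⊆ U := by
    intro x hx
    simp only [mem_setOf_eq, maxT, lt_iSup_iff] at hx
    obtain ⟨I, hI, hxI, hlt⟩ := hx
    have hIpos := T.pos I hI
    have hI𝓘 : I ∈ 𝓘 := ⟨hI,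
      (ENNReal.lt_div_iff_mul_lt (Or.inl hIpos.ne') (Or.inl (measure_ne_top μ I))).mp hlt⟩
    obtain ⟨K, hK, hIK, hKmax⟩ := T.exists_maximal 𝓘 h𝓘c I hI𝓘
    exact ⟨K, ⟨hK, hKmax⟩, hIK hxI⟩
  -- S is a.e. pairwise disjoint
  have hpair : S.Pairwise (AEDisjoint μ) := by
    intro I hI J hJ hne
    obtain ⟨mI, hmI⟩ := T.mem_level_of_mem_carrier (h𝓘c (hSsub hI))
    obtain ⟨mJ, hmJ⟩ := T.mem_level_of_mem_carrier (h𝓘c (hSsub hJ))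
    rcases le_total mI mJ with h | h
    · rcases T.struct h hmI hmJ with hsub | hnull
      · exact absurd (hJ.2 I (hSsub hI) hsub).symm hne
      · exact hnull
    · rcases T.struct h hmJ hmI with hsub | hnull
      · exact absurd (hI.2 J (hSsub hJ) hsub) hne
      · rw [AEDisjoint, inter_comm]; exact hnull
  -- the with-density measure
  set ν : Measure X := μ.withDensity g with hν
  have hνac : ν ≪ μ := withDensity_absolutelyContinuous μ g
  have hνI : ∀ I ∈ S, ν I = ∫⁻ x in I, g x ∂μ := fun I hI => withDensity_apply g (hSm I hI)
  have hνU : ν U = ∑' I : S, ν I := by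
    refine measure_sUnion₀ hSc (fun I hI J hJ hne => hνac (hpair hI hJ hne)) ?_
    exact fun I hI => (hSm I hI).nullMeasurableSet
  have hμU : μ U ≤ ∑' I : S, μ I := by
    rw [hU, sUnion_eq_biUnion]
    exact measure_biUnion_le μ hSc _
  have key : ENNReal.ofReal l * μ U ≤ ν U := by
    calc ENNReal.ofReal l * μ U ≤ ENNReal.ofReal l * ∑' I : S, μ I :=
      mul_le_mul_right hμU _
    _ = ∑' I : S, ENNReal.ofReal l * μ I := ENNReal.tsum_mul_left.symm
    _ ≤ ∑' I : S, ν I := by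
        refine ENNReal.tsum_le_tsum fun I => ?_
        rw [hνI I I.2]
        exact (hSsub I.2).2.le
    _ = ν U := hνU.symm
  by_cases hU0 : μ U = 0
  · have : μ {x | ENNReal.ofReal l < maxT μ T φ x} = 0 :=
      le_antisymm ((measure_mono hcover).trans hU0.le) zero_le
    rw [this, ENNReal.zero_rpow_of_pos hp0, mul_zero]
    exact zero_le
  · have hUpos : 0 < μ U := zero_lt_iff.mpr hU0
    have htrip : μ U ^ (-1 + 1/p) * ν U ≤ tripleNorm μ p φ := by
      rw [tripleNorm]
      refine le_iSup_of_le U (le_iSup_of_le hUm (le_iSup_of_le hUpos ?_))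
      rw [withDensity_apply g hUm]
    have hsplit : μ U ^ (1/p) = μ U * μ U ^ (1/p - 1) := by
      have h := ENNReal.rpow_add 1 (1/p - 1) hU0 hUfin
      rw [ENNReal.rpow_one] at h
      rw [show (1:ℝ) + (1/p - 1) = 1/p by ring] at h
      exact h
    calc ENNReal.ofReal l * μ {x | ENNReal.ofReal l < maxT μ T φ x} ^ (1/p)
        ≤ ENNReal.ofReal l * μ U ^ (1/p) :=
          mul_le_mul_right (ENNReal.rpow_le_rpow (measure_mono hcover) hp0.le) _
      _ = (ENNReal.ofReal l * μ U) * μ U ^ (1/p - 1) := by rw [hsplit]; ring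
      _ ≤ ν U * μ U ^ (1/p - 1) := mul_le_mul_left key _
      _ = μ U ^ (-1 + 1/p) * ν U := by rw [show (1/p - 1 : ℝ) = -1 + 1/p by ring]; ring
      _ ≤ tripleNorm μ p φ := htrip

lemma finset_prefix_sum {ι : Type*} (w : ι → ℝ≥0∞) {δ : ℝ≥0∞} (hδ : 0 < δ) :
    ∀ s : Finset ι, (∀ i ∈ s, w i ≠ ⊤) → (∀ i ∈ s, w i ≤ δ) →
      ∀ t : ℝ≥0∞, t ≤ ∑ i ∈ s, w i →
      ∃ u ⊆ s, t ≤ ∑ i ∈ u, w i ∧ ∑ i ∈ u, w i < t + δ := by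
  classical
  intro s
  induction s using Finset.induction_on with
  | empty =>
    intro _ _ t ht
    simp only [Finset.sum_empty, nonpos_iff_eq_zero] at ht
    exact ⟨∅, subset_rfl, by simp [ht], by simp [ht, hδ]⟩
  | insert ii ss hni ih =>
    intro hw hwδ t ht
    by_cases h : t ≤ ∑ j ∈ ss, w j
    · obtain ⟨u, hu, h1, h2⟩ := ih (fun j hj => hw j (Finset.mem_insert_of_mem hj))
        (fun j hj => hwδ j (Finset.mem_insert_of_mem hj)) t h
      exact ⟨u, hu.trans (Finset.subset_insert _ _), h1, h2⟩
    · push_neg at h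
      refine ⟨insert ii ss, subset_rfl, ht, ?_⟩
      rw [Finset.sum_insert hni]
      have hwi : w ii ≠ ⊤ := hw ii (Finset.mem_insert_self _ _)
      calc w ii + ∑ j ∈ ss, w j < w ii + t := ENNReal.add_lt_add_left hwi h
      _ ≤ δ + t := add_le_add_left (hwδ ii (Finset.mem_insert_self _ _)) t
      _ = t + δ := add_comm _ _

theorem exists_phi_lower {X : Type*} [MeasurableSpace X] (μ : Measure X)
    [IsProbabilityMeasure μ] (hna : Nonatomic μ) (T : TreeOn X μ)
    (p : ℝ) (hp : 1 < p) (f F : ℝ) (hf : 0 < f) (hfF : f ≤ F)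
    {r : ℝ} (hr0 : 0 < r) (hrF : r < F) :
    ∃ φ : X → ℝ, Measurable φ ∧ (∀ x, 0 ≤ φ x) ∧
      (∫⁻ x, ENNReal.ofReal (φ x) ∂μ) = ENNReal.ofReal f ∧
      tripleNorm μ p φ = ENNReal.ofReal F ∧
      ENNReal.ofReal r ≤ weakNormE μ p (maxT μ T φ) := by
  classical
  have hF : 0 < F := hf.trans_le hfF
  have hp0 : 0 < p := by linarith
  have hp1 : 0 < p - 1 := by linarith
  have hip : 0 < 1/p := by positivity
  have hip1 : 1/p < 1 := by rw [div_lt_one hp0]; linarith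
  set p' : ℝ := p / (p - 1) with hp'def
  have hp' : 0 < p' := by positivity
  set a : ℝ := (f/F) ^ p' with hadef
  have hfF0 : 0 < f / F := div_pos hf hF
  have ha0 : 0 < a := Real.rpow_pos_of_pos hfF0 _
  have ha1 : a ≤ 1 := Real.rpow_le_one hfF0.le ((div_le_one hF).mpr hfF) hp'.le
  set b : ℝ := (f/r) ^ p' with hbdef
  have hab : a < b :=
    Real.rpow_lt_rpow hfF0.le (div_lt_div_of_pos_left hf hr0 hrF) hp'
  set δr : ℝ := (b - a)/2 with hδrdef
  have hδr : 0 < δr := by rw [hδrdef]; linarith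
  -- choose a deep level
  obtain ⟨m, hm⟩ :=
    (T.level_tendsto.eventually_lt_const (ENNReal.ofReal_pos.mpr hδr)).exists
  have hlevlt : ∀ I ∈ T.level m, μ I < ENNReal.ofReal δr :=
    fun I hI => (le_biSup _ hI).trans_lt hm
  set L : Finset (Set X) := (T.level_finite m).toFinset with hLdef
  have hLmem : ∀ I, I ∈ L ↔ I ∈ T.level m := fun I => (T.level_finite m).mem_toFinset
  have hLpair : (↑L : Set (Set X)).Pairwise (Function.onFun (AEDisjoint μ) fun I => I) := by
    intro I hI J hJ hne
    simp only [Finset.mem_coe, hLmem] at hI hJ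
    exact T.level_aedisjoint m I hI J hJ hne
  have hLnull : ∀ I ∈ L, NullMeasurableSet I μ := fun I hI =>
    (T.meas I (T.level_subset_carrier m ((hLmem I).mp hI))).nullMeasurableSet
  have hsum1 : ∑ I ∈ L, μ I = 1 := by
    have h1 : μ (⋃ I ∈ L, (I : Set X)) = ∑ I ∈ L, μ I :=
      measure_biUnion_finset₀ hLpair hLnull
    have h2 : ⋃ I ∈ L, (I : Set X) = univ := by
      ext x
      simp only [mem_iUnion, exists_prop, mem_univ, iff_true, hLmem]
      have hx : x ∈ ⋃₀ T.level m := by rw [T.sUnion_level m]; trivial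
      obtain ⟨I, hI, hxI⟩ := hx
      exact ⟨I, hI, hxI⟩
    rw [← h1, h2, measure_univ]
  -- select a prefix with sum close to a
  obtain ⟨u, hu, hσ1, hσ2⟩ := finset_prefix_sum (fun I => μ I)
    (ENNReal.ofReal_pos.mpr hδr) L (fun I _ => measure_ne_top μ I)
    (fun I hI => (hlevlt I ((hLmem I).mp hI)).le) (ENNReal.ofReal a)
    (by rw [hsum1]; exact ENNReal.ofReal_le_one.mpr ha1)
  set σ : ℝ≥0∞ := ∑ I ∈ u, μ I with hσdef
  have humem : ∀ I ∈ u, I ∈ T.level m := fun I hI => (hLmem I).mp (hu hI)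
  have hσt : σ ≠ ⊤ := by
    intro h
    rw [h] at hσ2
    exact absurd hσ2 (by simp [ENNReal.add_lt_top])
  set s : ℝ := σ.toReal with hsdef
  have hσs : σ = ENNReal.ofReal s := (ENNReal.ofReal_toReal hσt).symm
  have has : a ≤ s := by
    rw [hσs] at hσ1
    exact (ENNReal.ofReal_le_ofReal_iff ENNReal.toReal_nonneg).mp hσ1
  have hs0 : 0 < s := ha0.trans_le has
  have hsb : s < b := by
    rw [hσs, ← ENNReal.ofReal_add ha0.le hδr.le] at hσ2
    have := (ENNReal.ofReal_lt_ofReal_iff (by linarith : (0:ℝ) < a + δr)).mp hσ2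
    rw [hδrdef] at this
    linarith
  -- choose subsets of each selected tree element
  have hchoice : ∀ I : Set X, ∃ A, A ⊆ I ∧ MeasurableSet A ∧
      (I ∈ u → μ A = ENNReal.ofReal (a/s) * μ I) := by
    intro I
    by_cases hIu : I ∈ u
    · have hIm : MeasurableSet I := T.meas I (T.level_subset_carrier m (humem I hIu))
      have htar : ENNReal.ofReal (a/s) * μ I ≤ μ I := by
        apply mul_le_of_le_one_left zero_le
        rw [ENNReal.ofReal_le_one]
        exact (div_le_one hs0).mpr has
      obtain ⟨A, h1, h2, h3⟩ := nonatomic_exists_subset_measure_eq hna hIm htar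
      exact ⟨A, h1, h2, fun _ => h3⟩
    · exact ⟨∅, empty_subset I, MeasurableSet.empty, fun h => absurd h hIu⟩
  choose Af hAf1 hAf2 hAf3 using hchoice
  set A : Set X := ⋃ I ∈ u, Af I with hAdef
  have hAm : MeasurableSet A := u.measurableSet_biUnion (fun I _ => hAf2 I)
  have hupair : (↑u : Set (Set X)).Pairwise (Function.onFun (AEDisjoint μ) fun I => I) :=
    hLpair.mono (Finset.coe_subset.mpr hu)
  have hupairA : (↑u : Set (Set X)).Pairwise (Function.onFun (AEDisjoint μ) Af) := by
    intro I hI J hJ hne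
    have h0 : μ (I ∩ J) = 0 := hupair hI hJ hne
    have hsub : Af I ∩ Af J ⊆ I ∩ J := inter_subset_inter (hAf1 I) (hAf1 J)
    exact le_antisymm ((measure_mono hsub).trans h0.le) zero_le
  have hμA : μ A = ENNReal.ofReal a := by
    rw [hAdef, measure_biUnion_finset₀ hupairA (fun I _ => (hAf2 I).nullMeasurableSet)]
    have : ∀ I ∈ u, μ (Af I) = ENNReal.ofReal (a/s) * μ I := fun I hI => hAf3 I hI
    rw [Finset.sum_congr rfl this, ← Finset.mul_sum, ← hσdef, hσs,
      ← ENNReal.ofReal_mul (by positivity), div_mul_cancel₀ a hs0.ne']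
  set c : ℝ := f / a with hcdef
  have hc0 : 0 < c := div_pos hf ha0
  set φ : X → ℝ := A.indicator (fun _ => c) with hφdef
  have hφm : Measurable φ := measurable_const.indicator hAm
  have hφ0 : ∀ x, 0 ≤ φ x := Set.indicator_nonneg (fun _ _ => hc0.le)
  have habs : ∀ x, ENNReal.ofReal |φ x| = A.indicator (fun _ => ENNReal.ofReal c) x := by
    intro x
    by_cases hx : x ∈ A <;> simp [hφdef, Set.indicator_of_mem, Set.indicator_of_notMem, hx,
      abs_of_nonneg hc0.le]
  have hint : ∀ E : Set X, ∫⁻ x in E, ENNReal.ofReal |φ x| ∂μ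
      = ENNReal.ofReal c * μ (A ∩ E) := by
    intro E
    rw [lintegral_congr habs, lintegral_indicator hAm, setLIntegral_const,
      Measure.restrict_apply hAm]
  -- the key real identity
  have hpne : p ≠ 0 := hp0.ne'
  have hp1ne : p - 1 ≠ 0 := hp1.ne'
  have hexp1 : p' * (1/p - 1) = -1 := by
    rw [hp'def]
    field_simp
    ring
  have hkey : c * a ^ (1/p : ℝ) = F := by
    have h1 : a ^ (1/p - 1 : ℝ) = F / f := by
      rw [hadef, ← Real.rpow_mul hfF0.le, hexp1, Real.rpow_neg_one, inv_div]
    have h2 : a ^ (1/p : ℝ) = a * a ^ (1/p - 1 : ℝ) := by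
      have h := Real.rpow_add ha0 1 (1/p - 1)
      rw [Real.rpow_one] at h
      rw [show (1:ℝ) + (1/p - 1) = 1/p by ring] at h
      exact h
    rw [h2, h1, hcdef]
    field_simp
  have hca : c * a = f := by
    rw [hcdef]
    field_simp
  have hexp2 : p' * (1 - 1/p) = 1 := by
    rw [hp'def]
    field_simp
  have hTot : ∫⁻ x, ENNReal.ofReal (φ x) ∂μ = ENNReal.ofReal f := by
    have habs' : ∀ x, ENNReal.ofReal (φ x) = ENNReal.ofReal |φ x| := fun x => by
      rw [abs_of_nonneg (hφ0 x)]
    rw [lintegral_congr habs', ← setLIntegral_univ, hint univ, inter_univ, hμA,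
      ← ENNReal.ofReal_mul hc0.le, hca]
  have hneg : (-1 + 1/p : ℝ) ≤ 0 := by linarith
  have ha0' : ENNReal.ofReal a ≠ 0 := (ENNReal.ofReal_pos.mpr ha0).ne'
  have htripA : tripleNorm μ p φ = ENNReal.ofReal F := by
    apply le_antisymm
    · rw [tripleNorm]
      refine iSup_le fun E => iSup_le fun hE => iSup_le fun hEpos => ?_
      rw [hint E]
      rcases eq_or_ne (μ (A ∩ E)) 0 with h0 | h0
      · rw [h0, mul_zero, mul_zero]; exact zero_le
      · have hx1 : μ (A ∩ E) ≤ μ E := measure_mono inter_subset_right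
        have hx2 : μ (A ∩ E) ≤ ENNReal.ofReal a :=
          le_of_le_of_eq (measure_mono inter_subset_left) hμA
        have hxt : μ (A ∩ E) ≠ ⊤ := measure_ne_top μ _
        calc μ E ^ (-1 + 1/p) * (ENNReal.ofReal c * μ (A ∩ E))
            ≤ μ (A ∩ E) ^ (-1 + 1/p) * (ENNReal.ofReal c * μ (A ∩ E)) :=
              mul_le_mul_left (ennreal_rpow_anti hneg hx1) _
          _ = ENNReal.ofReal c * (μ (A ∩ E) ^ (-1 + 1/p) * μ (A ∩ E) ^ (1 : ℝ)) := by
              rw [ENNReal.rpow_one]; ring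
          _ = ENNReal.ofReal c * μ (A ∩ E) ^ (1/p) := by
              rw [← ENNReal.rpow_add _ _ h0 hxt,
                show (-1 + 1/p + 1 : ℝ) = 1/p by ring]
          _ ≤ ENNReal.ofReal c * ENNReal.ofReal a ^ (1/p) :=
              mul_le_mul_right (ENNReal.rpow_le_rpow hx2 hip.le) _
          _ = ENNReal.ofReal F := by
              rw [ENNReal.ofReal_rpow_of_pos ha0, ← ENNReal.ofReal_mul hc0.le, hkey]
    · rw [tripleNorm]
      have hApos : 0 < μ A := by rw [hμA]; exact ENNReal.ofReal_pos.mpr ha0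
      have heq : μ A ^ (-1 + 1/p) * ∫⁻ x in A, ENNReal.ofReal |φ x| ∂μ
          = ENNReal.ofReal F := by
        rw [hint A, inter_self, hμA]
        calc ENNReal.ofReal a ^ (-1+1/p) * (ENNReal.ofReal c * ENNReal.ofReal a)
            = ENNReal.ofReal c * (ENNReal.ofReal a ^ (-1+1/p) * ENNReal.ofReal a ^ (1:ℝ)) := by
              rw [ENNReal.rpow_one]; ring
          _ = ENNReal.ofReal c * ENNReal.ofReal a ^ (1/p) := by
              rw [← ENNReal.rpow_add _ _ ha0' ENNReal.ofReal_ne_top,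
                show (-1 + 1/p + 1 : ℝ) = 1/p by ring]
          _ = ENNReal.ofReal F := by
              rw [ENNReal.ofReal_rpow_of_pos ha0, ← ENNReal.ofReal_mul hc0.le, hkey]
      exact le_iSup_of_le A (le_iSup_of_le hAm (le_iSup_of_le hApos heq.ge))
  -- the weak norm lower bound
  set l : ℝ := r / s ^ (1/p : ℝ) with hldef
  have hsp : 0 < s ^ (1/p : ℝ) := Real.rpow_pos_of_pos hs0 _
  have hl0 : 0 < l := div_pos hr0 hsp
  have hls : l * s ^ (1/p:ℝ) = r := div_mul_cancel₀ r hsp.ne'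
  have hlf : l * s < f := by
    have h1 : s ^ (1 - 1/p : ℝ) < b ^ (1 - 1/p : ℝ) :=
      Real.rpow_lt_rpow hs0.le hsb (by linarith)
    have h2 : b ^ (1 - 1/p : ℝ) = f / r := by
      rw [hbdef, ← Real.rpow_mul (by positivity : (0:ℝ) ≤ f/r), hexp2, Real.rpow_one]
    have h3 : l * s = r * s ^ (1 - 1/p : ℝ) := by
      have : s ^ (1-1/p:ℝ) = s / s ^ (1/p:ℝ) := by
        rw [Real.rpow_sub hs0, Real.rpow_one]
      rw [this, hldef]; ring
    rw [h3]
    calc r * s ^ (1-1/p:ℝ) < r * b ^ (1-1/p:ℝ) := (mul_lt_mul_iff_right₀ hr0).mpr h1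
    _ = r * (f/r) := by rw [h2]
    _ = f := by field_simp
  have hlfs : l < f / s := (lt_div_iff₀ hs0).mpr hlf
  have hcas : c * (a / s) = f / s := by
    rw [hcdef, div_mul_div_comm, mul_comm f a, mul_div_mul_left f s ha0.ne']
  have hMge : ∀ x ∈ ⋃ I ∈ u, (I : Set X), ENNReal.ofReal (f/s) ≤ maxT μ T φ x := by
    intro x hx
    simp only [mem_iUnion, exists_prop] at hx
    obtain ⟨I, hIu, hxI⟩ := hx
    have hIcar : I ∈ T.carrier := T.level_subset_carrier m (humem I hIu)
    have hIpos := T.pos I hIcar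
    have hIfin : μ I ≠ ⊤ := measure_ne_top μ I
    have hAI : ENNReal.ofReal (f/s) * μ I ≤ ∫⁻ y in I, ENNReal.ofReal |φ y| ∂μ := by
      rw [hint I]
      have h1 : μ (Af I) ≤ μ (A ∩ I) := by
        apply measure_mono
        apply subset_inter _ (hAf1 I)
        rw [hAdef]
        exact fun y hy => mem_iUnion₂.mpr ⟨I, hIu, hy⟩
      rw [hAf3 I hIu] at h1
      calc ENNReal.ofReal (f/s) * μ I
          = ENNReal.ofReal c * (ENNReal.ofReal (a/s) * μ I) := by
            rw [← mul_assoc, ← ENNReal.ofReal_mul hc0.le, hcas]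
        _ ≤ ENNReal.ofReal c * μ (A ∩ I) := mul_le_mul_right h1 _
    rw [maxT]
    refine le_iSup_of_le I (le_iSup_of_le hIcar (le_iSup_of_le hxI ?_))
    rw [ENNReal.le_div_iff_mul_le (Or.inl hIpos.ne') (Or.inl hIfin)]
    exact hAI
  have hsubl : (⋃ I ∈ u, (I:Set X)) ⊆ {x | ENNReal.ofReal l < maxT μ T φ x} := by
    intro x hx
    exact lt_of_lt_of_le
      ((ENNReal.ofReal_lt_ofReal_iff (div_pos hf hs0)).mpr hlfs) (hMge x hx)
  have hμbu : μ (⋃ I ∈ u, (I:Set X)) = σ :=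
    measure_biUnion_finset₀ hupair (fun I hI => hLnull I (hu hI))
  refine ⟨φ, hφm, hφ0, hTot, htripA, ?_⟩
  rw [weakNormE]
  refine le_iSup_of_le l (le_iSup_of_le hl0 ?_)
  calc ENNReal.ofReal r
      = ENNReal.ofReal l * ENNReal.ofReal (s ^ (1/p:ℝ)) := by
          rw [← ENNReal.ofReal_mul hl0.le, hls]
    _ = ENNReal.ofReal l * (ENNReal.ofReal s) ^ (1/p:ℝ) := by
          rw [ENNReal.ofReal_rpow_of_pos hs0]
    _ ≤ ENNReal.ofReal l * μ {x | ENNReal.ofReal l < maxT μ T φ x} ^ (1/p:ℝ) := by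
          apply mul_le_mul_right
          apply ENNReal.rpow_le_rpow _ hip.le
          rw [← hσs, ← hμbu]
          exact measure_mono hsubl

/-- Corollary 3.2: `sup { ‖M_T φ‖_{p,∞} : φ ≥ 0, ∫ φ = f, |||φ|||_{p,∞} = F } = F`. -/
theorem stmt4 {X : Type*} [MeasurableSpace X] (μ : MeasureTheory.Measure X)
    [IsProbabilityMeasure μ] (hna : Nonatomic μ) (T : TreeOn X μ)
    (p : ℝ) (hp : 1 < p) (f F : ℝ) (hf : 0 < f) (hfF : f ≤ F) :
    sSup {m : ℝ≥0∞ | ∃ φ : X → ℝ, Measurable φ ∧ (∀ x, 0 ≤ φ x) ∧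
        (∫⁻ x, ENNReal.ofReal (φ x) ∂μ) = ENNReal.ofReal f ∧
        tripleNorm μ p φ = ENNReal.ofReal F ∧
        m = weakNormE μ p (maxT μ T φ)} = ENNReal.ofReal F := by
  apply le_antisymm
  · refine sSup_le fun m hm => ?_
    obtain ⟨φ, hφm, hφ0, hint, htrip, rfl⟩ := hm
    rw [← htrip]
    exact weakNormE_maxT_le μ T p hp φ
  · apply ENNReal.le_of_forall_pos_le_add
    intro ε hε _
    by_cases hεF : F ≤ (ε : ℝ)
    · calc ENNReal.ofReal F ≤ ENNReal.ofReal ε := ENNReal.ofReal_le_ofReal hεF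
      _ = (ε : ℝ≥0∞) := ENNReal.ofReal_coe_nnreal
      _ ≤ _ + (ε : ℝ≥0∞) := le_add_self
    · push_neg at hεF
      have hε' : (0:ℝ) < ε := hε
      have hr0 : 0 < F - (ε:ℝ) := by linarith
      have hrF : F - (ε:ℝ) < F := by linarith
      obtain ⟨φ, h1, h2, h3, h4, h5⟩ :=
        exists_phi_lower μ hna T p hp f F hf hfF hr0 hrF
      have hmem : weakNormE μ p (maxT μ T φ) ∈
          {m : ℝ≥0∞ | ∃ φ : X → ℝ, Measurable φ ∧ (∀ x, 0 ≤ φ x) ∧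
            (∫⁻ x, ENNReal.ofReal (φ x) ∂μ) = ENNReal.ofReal f ∧
            tripleNorm μ p φ = ENNReal.ofReal F ∧
            m = weakNormE μ p (maxT μ T φ)} := ⟨φ, h1, h2, h3, h4, rfl⟩
      calc ENNReal.ofReal F = ENNReal.ofReal ((F - (ε:ℝ)) + (ε:ℝ)) := by rw [sub_add_cancel]
      _ ≤ ENNReal.ofReal (F - (ε:ℝ)) + ENNReal.ofReal (ε:ℝ) := ENNReal.ofReal_add_le
      _ ≤ _ + (ε : ℝ≥0∞) := by
          rw [ENNReal.ofReal_coe_nnreal]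
          exact add_le_add_left (h5.trans (le_sSup hmem)) _
end

section
/- Let (X,μ) be a non-atomic probability measure space, T a tree on X, M_T the associated maximal operator, p > 1, and 0 < f ≤ 1. Then for every λ > (1/f)^{1/(p−1)} there exists a measurable φ : X → [0,∞) with ∫_X φ dμ = f, |||φ|||_{p,∞} = 1, and μ({x ∈ X : M_T φ(x) ≥ λ}) ≥ 1/λ^p. -/
open MeasureTheory Set Filter ENNReal

namespace TreeAux

variable {X : Type*} [MeasurableSpace X] {μ : Measure X}

lemma level_subset (T : TreeOn X μ) (m : ℕ) : T.level m ⊆ T.carrier := by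
  intro I hI
  rw [T.carrier_eq]
  exact Set.mem_iUnion.2 ⟨m, hI⟩

lemma level_finite (T : TreeOn X μ) (m : ℕ) : (T.level m).Finite := by
  induction m with
  | zero => rw [T.level_zero]; exact Set.finite_singleton _
  | succ m ih =>
    rw [T.level_succ]
    exact ih.biUnion fun I hI => T.child_finite I (level_subset T m hI)

lemma level_sUnion (T : TreeOn X μ) (m : ℕ) : ⋃₀ T.level m = Set.univ := by
  induction m with
  | zero => rw [T.level_zero]; simp
  | succ m ih =>
    apply Set.eq_univ_of_univ_subset
    rw [← ih]
    rintro x ⟨I, hI, hxI⟩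
    have hIc := level_subset T m hI
    have hx : x ∈ ⋃₀ T.child I := by rw [T.child_union I hIc]; exact hxI
    obtain ⟨J, hJ, hxJ⟩ := hx
    exact ⟨J, by rw [T.level_succ]; exact Set.mem_biUnion hI hJ, hxJ⟩

lemma ancestor (T : TreeOn X μ) {m n : ℕ} (h : m ≤ n) :
    ∀ J ∈ T.level n, ∃ I ∈ T.level m, J ⊆ I := by
  induction n, h using Nat.le_induction with
  | base => intro J hJ; exact ⟨J, hJ, subset_rfl⟩
  | succ n hmn ih =>
    intro J hJ
    rw [T.level_succ] at hJ
    obtain ⟨I, hI, hJI⟩ := Set.mem_iUnion₂.1 hJ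
    obtain ⟨I0, hI0, hII0⟩ := ih I hI
    exact ⟨I0, hI0, (T.child_sub I (level_subset T n hI) J hJI).trans hII0⟩

lemma refine (T : TreeOn X μ) {m n : ℕ} (h : m ≤ n) :
    ∀ I ∈ T.level m, I ⊆ ⋃₀ {J | J ∈ T.level n ∧ J ⊆ I} := by
  induction n, h using Nat.le_induction with
  | base => intro I hI x hx; exact ⟨I, ⟨hI, subset_rfl⟩, hx⟩
  | succ n hmn ih =>
    intro I hI x hx
    obtain ⟨J, ⟨hJl, hJI⟩, hxJ⟩ := ih I hI hx
    have hJc := level_subset T n hJl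
    have hx' : x ∈ ⋃₀ T.child J := by rw [T.child_union J hJc]; exact hxJ
    obtain ⟨K, hK, hxK⟩ := hx'
    refine ⟨K, ⟨?_, (T.child_sub J hJc K hK).trans hJI⟩, hxK⟩
    rw [T.level_succ]; exact Set.mem_biUnion hJl hK

lemma greedy (μ : Measure X) (s ε : ℝ≥0∞) (V : Set X) (hV : μ V ≤ s)
    (H : Finset (Set X)) :
    (∀ J ∈ H, μ J ≤ ε) →
    ∃ K : Finset (Set X), K ⊆ H ∧ μ (V ∪ ⋃₀ ↑K) ≤ s ∧
      (s ≤ μ (V ∪ ⋃₀ ↑K) + ε ∨ V ∪ ⋃₀ ↑K = V ∪ ⋃₀ ↑H) := by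
  classical
  induction H using Finset.induction_on with
  | empty => intro _; exact ⟨∅, Finset.Subset.refl _, by simpa using hV, Or.inr rfl⟩
  | @insert J H hJH ih =>
    intro hbound
    obtain ⟨K, hKH, hKs, hKalt⟩ := ih (fun J' hJ' => hbound J' (Finset.mem_insert_of_mem hJ'))
    rcases hKalt with hclose | hall
    · exact ⟨K, hKH.trans (Finset.subset_insert _ _), hKs, Or.inl hclose⟩
    · by_cases hfit : μ (V ∪ ⋃₀ ↑(insert J K)) ≤ s
      · refine ⟨insert J K, Finset.insert_subset_insert _ hKH, hfit, Or.inr ?_⟩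
        simp only [Finset.coe_insert, Set.sUnion_insert]
        rw [Set.union_left_comm, hall, Set.union_left_comm]
      · push_neg at hfit
        refine ⟨K, hKH.trans (Finset.subset_insert _ _), hKs, Or.inl ?_⟩
        have heq : V ∪ ⋃₀ ↑(insert J K) = (V ∪ ⋃₀ ↑K) ∪ J := by
          simp only [Finset.coe_insert, Set.sUnion_insert]
          rw [Set.union_comm J, ← Set.union_assoc]
        calc s ≤ μ (V ∪ ⋃₀ ↑(insert J K)) := hfit.le
          _ = μ ((V ∪ ⋃₀ ↑K) ∪ J) := by rw [heq]
          _ ≤ μ (V ∪ ⋃₀ ↑K) + μ J := measure_union_le _ _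
          _ ≤ μ (V ∪ ⋃₀ ↑K) + ε := add_le_add_right (hbound J (Finset.mem_insert_self _ _)) _

def IsLU (T : TreeOn X μ) (V : Set X) : Prop :=
  ∃ m, ∃ G : Set (Set X), G.Finite ∧ G ⊆ T.level m ∧ V = ⋃₀ G

lemma step [IsProbabilityMeasure μ] (T : TreeOn X μ) {s : ℝ} (hs1 : s < 1)
    {ε : ℝ} (hε : 0 < ε) (V : Set X) (hV : IsLU T V) (hVs : μ V ≤ ENNReal.ofReal s) :
    ∃ W, IsLU T W ∧ V ⊆ W ∧ μ W ≤ ENNReal.ofReal s ∧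
      ENNReal.ofReal s ≤ μ W + ENNReal.ofReal ε := by
  obtain ⟨m, G, hGfin, hGlev, rfl⟩ := hV
  have h0 : (0:ℝ≥0∞) < ENNReal.ofReal ε := ENNReal.ofReal_pos.2 hε
  obtain ⟨m', hm'1, hm'2⟩ := ((T.level_tendsto.eventually_lt_const h0).and
      (Filter.eventually_ge_atTop m)).exists
  have hbound : ∀ J ∈ T.level m', μ J ≤ ENNReal.ofReal ε := fun J hJ =>
    le_of_lt (lt_of_le_of_lt (le_iSup₂ (f := fun I (_ : I ∈ T.level m') => μ I) J hJ) hm'1)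
  set G' : Set (Set X) := {J | J ∈ T.level m' ∧ ∃ I ∈ G, J ⊆ I} with hG'def
  set H : Set (Set X) := {J | J ∈ T.level m' ∧ ¬ ∃ I ∈ G, J ⊆ I} with hHdef
  have hG'fin : G'.Finite := (level_finite T m').subset (fun J hJ => hJ.1)
  have hHfin : H.Finite := (level_finite T m').subset (fun J hJ => hJ.1)
  have hG'eq : ⋃₀ G' = ⋃₀ G := by
    apply Set.Subset.antisymm
    · rintro x ⟨J, ⟨hJl, I, hIG, hJI⟩, hxJ⟩
      exact ⟨I, hIG, hJI hxJ⟩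
    · rintro x ⟨I, hIG, hxI⟩
      obtain ⟨J, ⟨hJl, hJI⟩, hxJ⟩ := refine T hm'2 I (hGlev hIG) hxI
      exact ⟨J, ⟨hJl, I, hIG, hJI⟩, hxJ⟩
  have hcover : ⋃₀ G ∪ ⋃₀ H = Set.univ := by
    apply Set.eq_univ_of_univ_subset
    rw [← level_sUnion T m']
    rintro x ⟨J, hJ, hxJ⟩
    by_cases hcase : ∃ I ∈ G, J ⊆ I
    · obtain ⟨I, hIG, hJI⟩ := hcase; exact Or.inl ⟨I, hIG, hJI hxJ⟩
    · exact Or.inr ⟨J, ⟨hJ, hcase⟩, hxJ⟩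
  obtain ⟨K, hKH, hKs, hKalt⟩ := greedy μ (ENNReal.ofReal s) (ENNReal.ofReal ε)
      (⋃₀ G) hVs hHfin.toFinset
      (fun J hJ => hbound J ((hHfin.mem_toFinset.1 hJ)).1)
  rcases hKalt with hclose | hall
  · refine ⟨⋃₀ G ∪ ⋃₀ ↑K, ⟨m', G' ∪ ↑K, hG'fin.union K.finite_toSet, ?_,
      by rw [Set.sUnion_union, hG'eq]⟩, Set.subset_union_left, hKs, hclose⟩
    exact Set.union_subset (fun J hJ => hJ.1)
      (fun J hJ => ((hHfin.mem_toFinset.1 (hKH hJ))).1)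
  · exfalso
    have huniv : (⋃₀ G ∪ ⋃₀ (hHfin.toFinset : Set (Set X))) = Set.univ := by
      rw [Set.Finite.coe_toFinset]; exact hcover
    rw [hall, huniv] at hKs
    simp only [measure_univ] at hKs
    exact absurd hKs (not_le.2 (ENNReal.ofReal_lt_one.2 hs1))

lemma exists_S [IsProbabilityMeasure μ] (T : TreeOn X μ) {s : ℝ}
    (hs0 : 0 < s) (hs1 : s < 1) :
    ∃ S : Set X, MeasurableSet S ∧ μ S = ENNReal.ofReal s ∧
      ∀ x ∈ S, ∃ I ∈ T.carrier, x ∈ I ∧ I ⊆ S := by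
  have key : ∀ n : ℕ, ∀ V : Set X, IsLU T V → μ V ≤ ENNReal.ofReal s →
      ∃ W, (IsLU T W ∧ μ W ≤ ENNReal.ofReal s) ∧ V ⊆ W ∧
        ENNReal.ofReal s ≤ μ W + ENNReal.ofReal ((n:ℝ)+1)⁻¹ := by
    intro n V hV hVs
    obtain ⟨W, h1, h2, h3, h4⟩ := step T hs1 (ε := ((n:ℝ)+1)⁻¹) (by positivity) V hV hVs
    exact ⟨W, ⟨h1, h3⟩, h2, h4⟩
  choose F hF1 hF2 hF3 using key
  have hQ0 : IsLU T (∅ : Set X) ∧ μ ∅ ≤ ENNReal.ofReal s :=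
    ⟨⟨0, ∅, Set.finite_empty, Set.empty_subset _, (Set.sUnion_empty).symm⟩, by simp⟩
  let u : ℕ → {V : Set X // IsLU T V ∧ μ V ≤ ENNReal.ofReal s} := fun n =>
    Nat.rec ⟨∅, hQ0⟩ (fun k p => ⟨F k p.1 p.2.1 p.2.2, hF1 k p.1 p.2.1 p.2.2⟩) n
  have hmono : ∀ n, (u n).1 ⊆ (u (n+1)).1 := fun n => hF2 n (u n).1 (u n).2.1 (u n).2.2
  have hmono' : Monotone fun n => (u n).1 := monotone_nat_of_le_succ hmono
  have hmeasn : ∀ n, MeasurableSet (u n).1 := by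
    intro n
    obtain ⟨m, G, hGfin, hGlev, heq⟩ := (u n).2.1
    rw [heq]
    exact MeasurableSet.sUnion hGfin.countable
      (fun I hI => T.meas I (level_subset T m (hGlev hI)))
  refine ⟨⋃ n, (u n).1, MeasurableSet.iUnion hmeasn, ?_, ?_⟩
  · rw [(hmono'.directed_le).measure_iUnion]
    apply le_antisymm
    · exact iSup_le fun n => (u n).2.2
    · apply ENNReal.le_of_forall_pos_le_add
      intro δ hδ _
      obtain ⟨n, hn⟩ := exists_nat_gt ((δ:ℝ))⁻¹
      have hδ' : ((n:ℝ)+1)⁻¹ ≤ (δ:ℝ) := by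
        have h1 : ((δ:ℝ))⁻¹ < (n:ℝ)+1 := hn.trans (lt_add_one _)
        exact le_of_lt ((inv_lt_comm₀ (by exact_mod_cast hδ) (by positivity)).1 h1)
      calc ENNReal.ofReal s ≤ μ (u (n+1)).1 + ENNReal.ofReal ((n:ℝ)+1)⁻¹ :=
            hF3 n (u n).1 (u n).2.1 (u n).2.2
        _ ≤ (⨆ k, μ (u k).1) + (δ : ℝ≥0∞) := add_le_add
            (le_iSup (fun k => μ (u k).1) (n+1))
            (by rw [← ENNReal.ofReal_coe_nnreal]; exact ENNReal.ofReal_le_ofReal hδ')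
  · intro x hx
    obtain ⟨n, hn⟩ := Set.mem_iUnion.1 hx
    obtain ⟨m, G, hGfin, hGlev, heq⟩ := (u n).2.1
    rw [heq] at hn
    obtain ⟨I, hIG, hxI⟩ := hn
    refine ⟨I, level_subset T m (hGlev hIG), hxI, ?_⟩
    intro y hy
    exact Set.mem_iUnion.2 ⟨n, by rw [heq]; exact ⟨I, hIG, hy⟩⟩

end TreeAux

/-- Sharpness construction in Theorem 3.1: for `0 < f ≤ 1` and `λ > (1/f)^{1/(p-1)}`
there is `φ ≥ 0` with `∫ φ = f`, `|||φ|||_{p,∞} = 1` and `μ({M_T φ ≥ λ}) ≥ 1/λ^p`. -/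
theorem stmt9 {X : Type*} [MeasurableSpace X] (μ : MeasureTheory.Measure X)
    [IsProbabilityMeasure μ] (hna : Nonatomic μ) (T : TreeOn X μ)
    (p : ℝ) (hp : 1 < p) (f : ℝ) (hf : 0 < f) (hf1 : f ≤ 1)
    (l : ℝ) (hl : (1 / f) ^ (1 / (p - 1)) < l) :
    ∃ φ : X → ℝ, Measurable φ ∧ (∀ x, 0 ≤ φ x) ∧
      (∫⁻ x, ENNReal.ofReal (φ x) ∂μ) = ENNReal.ofReal f ∧
      tripleNorm μ p φ = 1 ∧
      ENNReal.ofReal (1 / l ^ p) ≤ μ {x | ENNReal.ofReal l ≤ maxT μ T φ x} := by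
  classical
  have hp0 : (0:ℝ) < p := lt_trans one_pos hp
  have hp1 : (0:ℝ) < p - 1 := by linarith
  have h1f : (1:ℝ) ≤ 1/f := by rw [le_div_iff₀ hf]; linarith
  have hl1 : (1:ℝ) < l := lt_of_le_of_lt (Real.one_le_rpow h1f (by positivity)) hl
  have hl0 : (0:ℝ) < l := lt_trans one_pos hl1
  have hflp : 1/f < l ^ (p-1) := by
    have h := Real.rpow_lt_rpow (Real.rpow_nonneg (by positivity) _) hl hp1
    rwa [← Real.rpow_mul (by positivity : (0:ℝ) ≤ 1/f), one_div_mul_cancel (ne_of_gt hp1),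
      Real.rpow_one] at h
  set s : ℝ := l ^ (-p) with hsdef
  have hs0 : 0 < s := Real.rpow_pos_of_pos hl0 _
  have hs1 : s < 1 := Real.rpow_lt_one_of_one_lt_of_neg hl1 (by linarith)
  have h1s : 0 < 1 - s := by linarith
  have hls : l * s = l ^ (1-p) := by
    rw [hsdef]
    nth_rewrite 1 [← Real.rpow_one l]
    rw [← Real.rpow_add hl0]
    ring_nf
  have hsq : s ^ (1 - 1/p) = l ^ (1-p) := by
    rw [hsdef, ← Real.rpow_mul hl0.le]
    congr 1
    field_simp
    ring
  have hlpf : l ^ (1-p) < f := by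
    have h2 : (l ^ (p-1))⁻¹ < f := by
      rw [inv_lt_comm₀ (Real.rpow_pos_of_pos hl0 _) hf]
      rwa [one_div] at hflp
    have h3 : l ^ (1-p) = (l ^ (p-1))⁻¹ := by
      rw [← Real.rpow_neg hl0.le]
      congr 1
      ring
    rw [h3]; exact h2
  set d : ℝ := (f - l^(1-p))/(1-s) with hddef
  have hd0 : 0 ≤ d := div_nonneg (by linarith) h1s.le
  have hdls : d * (1-s) = f - l^(1-p) := div_mul_cancel₀ _ (ne_of_gt h1s)
  have hdl : d ≤ l := by
    rw [hddef, div_le_iff₀ h1s]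
    have hh : l * (1-s) = l - l^(1-p) := by rw [mul_sub, mul_one, hls]
    rw [hh]; linarith
  obtain ⟨S, hSmeas, hμS, hSprop⟩ := TreeAux.exists_S T hs0 hs1
  set φ : X → ℝ := fun x => if x ∈ S then l else d with hφdef
  have hφmeas : Measurable φ := Measurable.ite hSmeas measurable_const measurable_const
  have hφnn : ∀ x, 0 ≤ φ x := by
    intro x
    by_cases h : x ∈ S
    · simp only [hφdef, if_pos h]; exact hl0.le
    · simp only [hφdef, if_neg h]; exact hd0
  have hfun : ∀ x, ENNReal.ofReal |φ x| =
      S.indicator (fun _ => ENNReal.ofReal l) x + Sᶜ.indicator (fun _ => ENNReal.ofReal d) x := by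
    intro x
    rw [abs_of_nonneg (hφnn x)]
    by_cases h : x ∈ S
    · simp [hφdef, h]
    · simp [hφdef, h]
  have helper : ∀ E : Set X, (∫⁻ x in E, ENNReal.ofReal |φ x| ∂μ)
      = ENNReal.ofReal l * μ (E ∩ S) + ENNReal.ofReal d * μ (E \ S) := by
    intro E
    calc (∫⁻ x in E, ENNReal.ofReal |φ x| ∂μ)
        = ∫⁻ x in E, (S.indicator (fun _ => ENNReal.ofReal l) x
            + Sᶜ.indicator (fun _ => ENNReal.ofReal d) x) ∂μ := lintegral_congr hfun
      _ = (∫⁻ x in E, S.indicator (fun _ => ENNReal.ofReal l) x ∂μ)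
            + ∫⁻ x in E, Sᶜ.indicator (fun _ => ENNReal.ofReal d) x ∂μ :=
          lintegral_add_left (measurable_const.indicator hSmeas) _
      _ = ENNReal.ofReal l * μ (E ∩ S) + ENNReal.ofReal d * μ (E \ S) := by
          rw [lintegral_indicator hSmeas, lintegral_indicator hSmeas.compl,
            setLIntegral_const, setLIntegral_const,
            Measure.restrict_apply hSmeas, Measure.restrict_apply hSmeas.compl,
            Set.inter_comm S E, Set.inter_comm Sᶜ E, ← Set.diff_eq]
  have hint : (∫⁻ x, ENNReal.ofReal (φ x) ∂μ) = ENNReal.ofReal f := by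
    have h1 : (∫⁻ x, ENNReal.ofReal (φ x) ∂μ) = ∫⁻ x in Set.univ, ENNReal.ofReal |φ x| ∂μ := by
      rw [setLIntegral_univ]
      exact lintegral_congr fun x => by rw [abs_of_nonneg (hφnn x)]
    rw [h1, helper, Set.univ_inter, ← Set.compl_eq_univ_diff,
      measure_compl hSmeas (measure_ne_top μ S), measure_univ, hμS,
      ← ENNReal.ofReal_one, ← ENNReal.ofReal_sub _ hs0.le,
      ← ENNReal.ofReal_mul hl0.le, ← ENNReal.ofReal_mul hd0,
      ← ENNReal.ofReal_add (mul_nonneg hl0.le hs0.le) (mul_nonneg hd0 (by linarith))]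
    congr 1
    rw [hls]
    linarith [hdls]
  have hq0 : (0:ℝ) ≤ 1 - 1/p := by
    rw [sub_nonneg, div_le_one hp0]; linarith
  have hq1 : 1 - 1/p ≤ 1 := by
    have : (0:ℝ) ≤ 1/p := by positivity
    linarith
  have keyreal : ∀ u w : ℝ, 0 ≤ u → 0 ≤ w → u ≤ s → u + w ≤ 1 → 0 < u + w →
      l*u + d*w ≤ (u+w) ^ (1 - 1/p) := by
    intro u w hu hw hus huw1 huw0
    by_cases hcase : u + w ≤ s
    · have h1 : l*u + d*w ≤ l*(u+w) := by nlinarith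
      have h2 : l ≤ (u+w) ^ (-(1/p)) := by
        have hss : s ^ (-(1/p)) ≤ (u+w) ^ (-(1/p)) :=
          Real.rpow_le_rpow_of_nonpos huw0 hcase (neg_nonpos.2 (by positivity))
        have hsl : s ^ (-(1/p)) = l := by
          rw [hsdef, ← Real.rpow_mul hl0.le,
            show -p * -(1/p) = 1 by field_simp, Real.rpow_one]
        linarith
      have h3 : (u+w) ^ (1 - 1/p) = (u+w) ^ (-(1/p)) * (u+w) := by
        rw [← Real.rpow_add_one (ne_of_gt huw0) (-(1/p))]
        congr 1
        ring
      rw [h3]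
      nlinarith [h2, huw0]
    · push_neg at hcase
      set t := u + w with htdef
      set θ := (t - s)/(1-s) with hθdef
      have hθ0 : 0 ≤ θ := div_nonneg (by linarith) h1s.le
      have hθ1 : θ ≤ 1 := by rw [hθdef, div_le_one h1s]; linarith
      have hθs : θ * (1-s) = t - s := div_mul_cancel₀ _ (ne_of_gt h1s)
      have hconv : (1-θ) * s + θ = t := by linear_combination hθs
      have hconc := (Real.concaveOn_rpow hq0 hq1).2 (Set.mem_Ici.2 hs0.le)
        (Set.mem_Ici.2 zero_le_one) (sub_nonneg.2 hθ1) hθ0 (by ring)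
      simp only [smul_eq_mul, Real.one_rpow, mul_one] at hconc
      rw [hconv] at hconc
      have hd2 : d*(t-s) = θ * (f - l^(1-p)) := by rw [← hθs, ← hdls]; ring
      have step1 : l*u + d*w ≤ l*s + d*(t-s) := by
        nlinarith [mul_nonneg (sub_nonneg.2 hdl) (sub_nonneg.2 hus)]
      calc l*u + d*w ≤ l*s + d*(t-s) := step1
        _ = (1-θ)*(s^(1-1/p)) + θ*f := by rw [hd2, hsq, ← hls]; ring
        _ ≤ (1-θ)*(s^(1-1/p)) + θ :=
            add_le_add_right (mul_le_of_le_one_right hθ0 hf1) _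
        _ ≤ t ^ (1-1/p) := hconc
  have hnorm_le : tripleNorm μ p φ ≤ 1 := by
    simp only [tripleNorm]
    refine iSup_le fun E => iSup_le fun hE => iSup_le fun hEpos => ?_
    rw [helper E]
    set A := μ (E ∩ S) with hA
    set B := μ (E \ S) with hB
    have hAB : A + B = μ E := measure_inter_add_diff E hSmeas
    have hAtop : A ≠ ⊤ := measure_ne_top μ _
    have hBtop : B ≠ ⊤ := measure_ne_top μ _
    have hAu : A = ENNReal.ofReal A.toReal := (ENNReal.ofReal_toReal hAtop).symm
    have hBw : B = ENNReal.ofReal B.toReal := (ENNReal.ofReal_toReal hBtop).symm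
    set u := A.toReal
    set w := B.toReal
    have hu0 : 0 ≤ u := ENNReal.toReal_nonneg
    have hw0 : 0 ≤ w := ENNReal.toReal_nonneg
    have hus : u ≤ s := by
      have h1 : A ≤ ENNReal.ofReal s := hμS ▸ measure_mono Set.inter_subset_right
      calc u ≤ (ENNReal.ofReal s).toReal := ENNReal.toReal_mono ENNReal.ofReal_ne_top h1
        _ = s := ENNReal.toReal_ofReal hs0.le
    have hμE : μ E = ENNReal.ofReal (u + w) := by
      rw [← hAB, ENNReal.ofReal_add hu0 hw0, ← hAu, ← hBw]
    have huw1 : u + w ≤ 1 := by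
      have hh : μ E ≤ 1 := prob_le_one
      rw [hμE] at hh
      exact ENNReal.ofReal_le_one.1 hh
    have huw0 : 0 < u + w := by
      have hh : 0 < μ E := hEpos
      rw [hμE] at hh
      exact ENNReal.ofReal_pos.1 hh
    have hkey := keyreal u w hu0 hw0 hus huw1 huw0
    rw [hμE, hAu, hBw]
    calc (ENNReal.ofReal (u+w)) ^ (-1 + 1/p) *
          (ENNReal.ofReal l * ENNReal.ofReal u + ENNReal.ofReal d * ENNReal.ofReal w)
        = (ENNReal.ofReal (u+w)) ^ (-1 + 1/p) * ENNReal.ofReal (l*u + d*w) := by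
          rw [← ENNReal.ofReal_mul hl0.le, ← ENNReal.ofReal_mul hd0,
            ← ENNReal.ofReal_add (mul_nonneg hl0.le hu0) (mul_nonneg hd0 hw0)]
      _ ≤ (ENNReal.ofReal (u+w)) ^ (-1 + 1/p) * (ENNReal.ofReal (u+w)) ^ (1 - 1/p) := by
          apply mul_le_mul_right
          rw [ENNReal.ofReal_rpow_of_pos huw0]
          exact ENNReal.ofReal_le_ofReal hkey
      _ = 1 := by
          rw [← ENNReal.rpow_add _ _ (ne_of_gt (ENNReal.ofReal_pos.2 huw0))
            ENNReal.ofReal_ne_top, show (-1+1/p)+(1-1/p) = 0 by ring, ENNReal.rpow_zero]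
  have hSpos : 0 < μ S := by rw [hμS]; exact ENNReal.ofReal_pos.2 hs0
  have hval : μ S ^ (-1 + 1/p) * (∫⁻ x in S, ENNReal.ofReal |φ x| ∂μ) = 1 := by
    rw [helper S, Set.inter_self, Set.diff_self, measure_empty, mul_zero, add_zero, hμS]
    have hs_ne : ENNReal.ofReal s ≠ 0 := ne_of_gt (ENNReal.ofReal_pos.2 hs0)
    calc (ENNReal.ofReal s) ^ (-1+1/p) * (ENNReal.ofReal l * ENNReal.ofReal s)
        = ENNReal.ofReal l * ((ENNReal.ofReal s) ^ (-1+1/p) * (ENNReal.ofReal s) ^ (1:ℝ)) := by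
          rw [ENNReal.rpow_one]; ring
      _ = ENNReal.ofReal l * (ENNReal.ofReal s) ^ (1/p) := by
          rw [← ENNReal.rpow_add _ _ hs_ne ENNReal.ofReal_ne_top,
            show (-1+1/p)+(1:ℝ) = 1/p by ring]
      _ = ENNReal.ofReal l * ENNReal.ofReal (s ^ (1/p)) := by
          rw [ENNReal.ofReal_rpow_of_pos hs0]
      _ = 1 := by
          have hsl : s ^ (1/p) = l⁻¹ := by
            rw [hsdef, ← Real.rpow_mul hl0.le,
              show -p * (1/p) = -1 by field_simp, Real.rpow_neg_one]
          rw [hsl, ← ENNReal.ofReal_mul hl0.le, mul_inv_cancel₀ (ne_of_gt hl0),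
            ENNReal.ofReal_one]
  have hnorm_ge : (1:ℝ≥0∞) ≤ tripleNorm μ p φ := by
    rw [← hval]
    simp only [tripleNorm]
    exact le_iSup_of_le S (le_iSup_of_le hSmeas (le_iSup_of_le hSpos le_rfl))
  have hsub2 : S ⊆ {x | ENNReal.ofReal l ≤ maxT μ T φ x} := by
    intro x hx
    obtain ⟨I, hIc, hxI, hIS⟩ := hSprop x hx
    have hIint : (∫⁻ y in I, ENNReal.ofReal |φ y| ∂μ) = ENNReal.ofReal l * μ I := by
      rw [helper I, Set.inter_eq_left.2 hIS, Set.diff_eq_empty.2 hIS, measure_empty,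
        mul_zero, add_zero]
    have hIpos := T.pos I hIc
    have hdiv : ENNReal.ofReal l = (∫⁻ y in I, ENNReal.ofReal |φ y| ∂μ) / μ I := by
      rw [hIint, mul_div_assoc, ENNReal.div_self (ne_of_gt hIpos) (measure_ne_top μ I),
        mul_one]
    show ENNReal.ofReal l ≤ maxT μ T φ x
    simp only [maxT]
    rw [hdiv]
    exact le_iSup_of_le I (le_iSup_of_le hIc (le_iSup_of_le hxI le_rfl))
  refine ⟨φ, hφmeas, hφnn, hint, le_antisymm hnorm_le hnorm_ge, ?_⟩
  have h1 : (1:ℝ) / l ^ p = s := by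
    rw [hsdef, one_div, ← Real.rpow_neg hl0.le]
  rw [h1, ← hμS]
  exact measure_mono hsub2
end
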